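/- arXiv:2604.08776 — 7 statements merged into one kernel-verified Lean document; each statement's English description precedes it below -/
import Mathlib

section
/- Two matrices A, B ∈ GL₂(ℤ_p) are conjugate in GL₂(ℤ_p) if and only if they have the same characteristic polynomial and μ(A) = μ(B), where μ(A) is the largest μ ∈ ℤ ∪ {∞} such that A is congruent to a scalar matrix modulo p^μ. -/
open Polynomial Matrix

namespace Stmt4Aux

variable {p : ℕ} [hp : Fact p.Prime]

local notation "M2" => Matrix (Fin 2) (Fin 2) ℤ_[p]

lemma my_charpoly_fin_two {R : Type*} [CommRing R] (M : Matrix (Fin 2) (Fin 2) R) :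
    M.charpoly = X ^ 2 - C M.trace * X + C M.det := by
  rw [Matrix.charpoly, Matrix.det_fin_two, Matrix.charmatrix_apply_eq,
    Matrix.charmatrix_apply_eq, Matrix.charmatrix_apply_ne _ _ _ (by decide),
    Matrix.charmatrix_apply_ne _ _ _ (by decide), Matrix.trace_fin_two, Matrix.det_fin_two]
  simp [C_add, C_sub, C_mul]; ring

lemma charpoly_eq_iff {R : Type*} [CommRing R] (M N : Matrix (Fin 2) (Fin 2) R) :
    M.charpoly = N.charpoly ↔ M.trace = N.trace ∧ M.det = N.det := by
  rw [my_charpoly_fin_two, my_charpoly_fin_two]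
  constructor
  · intro h
    have hd : M.det = N.det := by
      have := congrArg (Polynomial.eval 0) h
      simpa using this
    have ht : M.trace = N.trace := by
      have := congrArg (fun q => Polynomial.coeff q 1) h
      simpa [coeff_X, coeff_C] using this
    exact ⟨ht, hd⟩
  · rintro ⟨h1, h2⟩; rw [h1, h2]

lemma cond_iff (M : M2) (q : ℤ_[p]) :
    (∃ α : ℤ_[p], ∀ i j, q ∣ (M i j - (α • (1 : M2)) i j)) ↔
      q ∣ M 0 1 ∧ q ∣ M 1 0 ∧ q ∣ (M 1 1 - M 0 0) := by
  constructor
  · rintro ⟨α, h⟩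
    refine ⟨by simpa using h 0 1, by simpa using h 1 0, ?_⟩
    have h1 := h 1 1
    have h0 := h 0 0
    simp only [Matrix.smul_apply, Matrix.one_apply_eq, smul_eq_mul, mul_one] at h1 h0
    have := dvd_sub h1 h0
    simpa using this
  · rintro ⟨h1, h2, h3⟩
    refine ⟨M 0 0, fun i j => ?_⟩
    fin_cases i <;> fin_cases j <;>
      simp [Matrix.one_apply, h1, h2] <;> simpa using h3

lemma dvd_conj_entries {n : Type*} [Fintype n] [DecidableEq n] (q : ℤ_[p])
    (X M Y : Matrix n n ℤ_[p]) (h : ∀ i j, q ∣ M i j) :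
    ∀ i j, q ∣ (X * M * Y) i j := by
  intro i j
  rw [Matrix.mul_apply]
  refine Finset.dvd_sum fun k _ => ?_
  refine Dvd.dvd.mul_right ?_ _
  rw [Matrix.mul_apply]
  exact Finset.dvd_sum fun l _ => (h l k).mul_left _

lemma eq_zero_of_forall_pow_dvd (x : ℤ_[p]) (h : ∀ m : ℕ, (p : ℤ_[p]) ^ m ∣ x) : x = 0 := by
  by_contra hx
  obtain ⟨m, hm⟩ := PadicInt.exists_pow_neg_lt p (lt_of_le_of_ne (norm_nonneg x)
    (fun h' => hx (norm_eq_zero.mp h'.symm)))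
  have := (PadicInt.norm_le_pow_iff_mem_span_pow x m).mpr
    (by rw [Ideal.mem_span_singleton]; exact h m)
  linarith [hm, this]

lemma exists_not_pow_dvd {x : ℤ_[p]} (h : x ≠ 0) : ∃ n : ℕ, ¬ (p : ℤ_[p]) ^ n ∣ x := by
  by_contra hc
  push_neg at hc
  exact h (eq_zero_of_forall_pow_dvd x hc)

lemma pow_dvd_iff_norm (x : ℤ_[p]) (m : ℕ) :
    (p : ℤ_[p]) ^ m ∣ x ↔ ‖x‖ ≤ (p : ℝ) ^ (-(m : ℤ)) := by
  rw [← Ideal.mem_span_singleton, ← PadicInt.norm_le_pow_iff_mem_span_pow]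

lemma isUnit_of_not_dvd {x : ℤ_[p]} (h : ¬ (p : ℤ_[p]) ∣ x) : IsUnit x := by
  rw [PadicInt.isUnit_iff]
  have h1 := PadicInt.norm_le_one x
  have h2 := (PadicInt.norm_lt_one_iff_dvd x).not.mpr h
  push_neg at h2
  linarith

lemma det_smul_one_add (x y : ℤ_[p]) (N : M2) :
    (x • (1 : M2) + y • N).det = x ^ 2 + x * y * N.trace + y ^ 2 * N.det := by
  rw [Matrix.det_fin_two, Matrix.det_fin_two, Matrix.trace_fin_two]
  simp [Matrix.one_apply]
  ring

lemma trace_smul_one_add (x y : ℤ_[p]) (N : M2) :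
    (x • (1 : M2) + y • N).trace = 2 * x + y * N.trace := by
  rw [Matrix.trace_fin_two, Matrix.trace_fin_two]
  simp [Matrix.one_apply]
  ring

lemma dvd_of_sq (μ : ℕ) (d t : ℤ_[p])
    (h : (p : ℤ_[p]) ^ (2 * μ) ∣ d * (d - (p : ℤ_[p]) ^ μ * t)) :
    (p : ℤ_[p]) ^ μ ∣ d := by
  have hp0 : (0:ℝ) < (p:ℝ) := by exact_mod_cast hp.out.pos
  by_contra hnd
  rw [pow_dvd_iff_norm, not_le] at hnd
  rw [pow_dvd_iff_norm] at h
  have hx : ‖(p : ℤ_[p]) ^ μ * t‖ < ‖d‖ := by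
    calc ‖(p : ℤ_[p]) ^ μ * t‖ = ‖(p : ℤ_[p]) ^ μ‖ * ‖t‖ := norm_mul _ _
      _ ≤ (p : ℝ) ^ (-(μ : ℤ)) * 1 := by
          rw [PadicInt.norm_p_pow]
          exact mul_le_mul_of_nonneg_left (PadicInt.norm_le_one t) (by positivity)
      _ < ‖d‖ := by rw [mul_one]; exact hnd
  have hsub : ‖d‖ ≤ ‖d - (p : ℤ_[p]) ^ μ * t‖ := by
    have h1 : ‖d‖ = ‖(d - (p : ℤ_[p]) ^ μ * t) + (p : ℤ_[p]) ^ μ * t‖ := by ring_nf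
    rw [h1]
    have h2 := PadicInt.nonarchimedean (d - (p : ℤ_[p]) ^ μ * t) ((p : ℤ_[p]) ^ μ * t)
    rcases max_cases ‖d - (p : ℤ_[p]) ^ μ * t‖ ‖(p : ℤ_[p]) ^ μ * t‖ with ⟨he, _⟩ | ⟨he, hlt⟩
    · rw [he] at h2; exact h2
    · rw [he, ← h1] at h2
      linarith
  have hmul : ‖d * (d - (p : ℤ_[p]) ^ μ * t)‖ = ‖d‖ * ‖d - (p : ℤ_[p]) ^ μ * t‖ :=
    norm_mul _ _
  have hlow : (p : ℝ) ^ (-(μ : ℤ)) * (p : ℝ) ^ (-(μ : ℤ)) < ‖d‖ * ‖d - (p : ℤ_[p]) ^ μ * t‖ := by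
    have h0 : (0:ℝ) < (p : ℝ) ^ (-(μ : ℤ)) := by positivity
    nlinarith [norm_nonneg d, lt_of_lt_of_le hnd hsub]
  rw [← hmul] at hlow
  have heq : (p : ℝ) ^ (-(2 * μ : ℕ) : ℤ) = (p : ℝ) ^ (-(μ : ℤ)) * (p : ℝ) ^ (-(μ : ℤ)) := by
    rw [← zpow_add₀ (ne_of_gt hp0)]
    congr 1
    push_cast; ring
  rw [heq] at h
  linarith

lemma conj_of_unit (M N Q : M2) (hd : IsUnit Q.det) (hc : M * Q = Q * N) :
    ∃ P : (M2)ˣ, (↑P⁻¹ : M2) * M * (↑P : M2) = N := by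
  obtain ⟨u, hu⟩ := (Matrix.isUnit_iff_isUnit_det Q).mpr hd
  refine ⟨u, ?_⟩
  have h1 : (↑u⁻¹ : M2) * Q = 1 := by rw [← hu]; exact u.inv_mul
  calc (↑u⁻¹ : M2) * M * (↑u : M2) = ↑u⁻¹ * (M * Q) := by rw [hu, mul_assoc]
    _ = ↑u⁻¹ * Q * N := by rw [hc, mul_assoc]
    _ = N := by rw [h1, one_mul]

lemma companion (M : M2)
    (h : ¬((p : ℤ_[p]) ∣ M 0 1 ∧ (p : ℤ_[p]) ∣ M 1 0 ∧ (p : ℤ_[p]) ∣ (M 1 1 - M 0 0))) :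
    ∃ P : (M2)ˣ, (↑P⁻¹ : M2) * M * (↑P : M2) = !![0, -M.det; 1, M.trace] := by
  have hM := Matrix.eta_fin_two M
  set a := M 0 0; set b := M 0 1; set c := M 1 0; set d := M 1 1
  have hdet : M.det = a * d - b * c := Matrix.det_fin_two M
  have htr : M.trace = a + d := Matrix.trace_fin_two M
  rw [hdet, htr]
  by_cases hc : (p : ℤ_[p]) ∣ c
  · by_cases hb : (p : ℤ_[p]) ∣ b
    · have he : ¬ (p : ℤ_[p]) ∣ (d - a) := fun hd' => h ⟨hb, hc, hd'⟩
      refine conj_of_unit M _ !![1, a + b; 1, c + d] ?_ ?_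
      · rw [Matrix.det_fin_two_of]
        refine isUnit_of_not_dvd fun hdvd => he ?_
        have heq : d - a = (1 * (c + d) - (a + b) * 1) - c + b := by ring
        rw [heq]
        exact dvd_add (dvd_sub hdvd hc) hb
      · rw [hM]
        ext i j
        fin_cases i <;> fin_cases j <;>
          simp [Matrix.mul_apply, Fin.sum_univ_two] <;> ring
    · refine conj_of_unit M _ !![0, b; 1, d] ?_ ?_
      · rw [Matrix.det_fin_two_of]
        refine isUnit_of_not_dvd fun hdvd => hb ?_
        have heq : b = -(0 * d - b * 1) := by ring
        rw [heq]; exact hdvd.neg_right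
      · rw [hM]
        ext i j
        fin_cases i <;> fin_cases j <;>
          simp [Matrix.mul_apply, Fin.sum_univ_two] <;> ring
  · refine conj_of_unit M _ !![1, a; 0, c] ?_ ?_
    · rw [Matrix.det_fin_two_of]
      refine isUnit_of_not_dvd fun hdvd => hc ?_
      simpa using hdvd
    · rw [hM]
      ext i j
      fin_cases i <;> fin_cases j <;>
        simp [Matrix.mul_apply, Fin.sum_univ_two] <;> ring

lemma conj_smul_add (u : (M2)ˣ) (x y : ℤ_[p]) (N : M2) :
    (↑u⁻¹ : M2) * (x • (1 : M2) + y • N) * (↑u : M2)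
      = x • (1 : M2) + y • ((↑u⁻¹ : M2) * N * (↑u : M2)) := by
  have h1 : (↑u⁻¹ : M2) * (↑u : M2) = 1 := u.inv_mul
  rw [mul_add, add_mul, mul_smul_comm, smul_mul_assoc, mul_one, h1,
    mul_smul_comm, smul_mul_assoc]

lemma main_back (A B : M2) (ht : A.trace = B.trace) (hd : A.det = B.det)
    (hm : ∀ m : ℕ,
      ((p:ℤ_[p])^m ∣ A 0 1 ∧ (p:ℤ_[p])^m ∣ A 1 0 ∧ (p:ℤ_[p])^m ∣ (A 1 1 - A 0 0)) ↔
      ((p:ℤ_[p])^m ∣ B 0 1 ∧ (p:ℤ_[p])^m ∣ B 1 0 ∧ (p:ℤ_[p])^m ∣ (B 1 1 - B 0 0))) :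
    ∃ P : (M2)ˣ, (↑P⁻¹ : M2) * A * (↑P : M2) = B := by
  classical
  have hpne : (p : ℤ_[p]) ≠ 0 := Nat.cast_ne_zero.mpr hp.out.ne_zero
  have hpμne : ∀ μ : ℕ, ((p : ℤ_[p]) ^ μ) ≠ 0 := fun μ => pow_ne_zero _ hpne
  by_cases hsc : A 0 1 = 0 ∧ A 1 0 = 0 ∧ A 1 1 - A 0 0 = 0
  · -- A is scalar
    obtain ⟨h1, h2, h3⟩ := hsc
    have hBdvd : ∀ m : ℕ, (p:ℤ_[p])^m ∣ B 0 1 ∧ (p:ℤ_[p])^m ∣ B 1 0 ∧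
        (p:ℤ_[p])^m ∣ (B 1 1 - B 0 0) := fun m =>
      (hm m).mp ⟨by rw [h1]; exact dvd_zero _, by rw [h2]; exact dvd_zero _, by rw [h3]; exact dvd_zero _⟩
    have hb1 : B 0 1 = 0 := eq_zero_of_forall_pow_dvd _ fun m => (hBdvd m).1
    have hb2 : B 1 0 = 0 := eq_zero_of_forall_pow_dvd _ fun m => (hBdvd m).2.1
    have hb3 : B 1 1 - B 0 0 = 0 := eq_zero_of_forall_pow_dvd _ fun m => (hBdvd m).2.2
    have ha3 : A 1 1 = A 0 0 := by linear_combination h3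
    have hb3' : B 1 1 = B 0 0 := by linear_combination hb3
    have h00 : A 0 0 = B 0 0 := by
      rw [Matrix.trace_fin_two, Matrix.trace_fin_two, ha3, hb3'] at ht
      have h2ne : (2 : ℤ_[p]) ≠ 0 := two_ne_zero
      exact mul_left_cancel₀ h2ne (by linear_combination ht)
    refine ⟨1, ?_⟩
    simp only [inv_one, Units.val_one, one_mul, mul_one]
    ext i j
    fin_cases i <;> fin_cases j
    · exact h00
    · exact h1.trans hb1.symm
    · exact h2.trans hb2.symm
    · exact ha3.trans (h00.trans hb3'.symm)
  · -- A is not scalar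
    set PA : ℕ → Prop := fun m =>
      (p:ℤ_[p])^m ∣ A 0 1 ∧ (p:ℤ_[p])^m ∣ A 1 0 ∧ (p:ℤ_[p])^m ∣ (A 1 1 - A 0 0) with hPAdef
    have hanti : ∀ {m k : ℕ}, m ≤ k → PA k → PA m := by
      rintro m k hmk ⟨h1, h2, h3⟩
      exact ⟨(pow_dvd_pow _ hmk).trans h1, (pow_dvd_pow _ hmk).trans h2,
        (pow_dvd_pow _ hmk).trans h3⟩
    have hex : ∃ n : ℕ, ¬ PA n := by
      have : A 0 1 ≠ 0 ∨ A 1 0 ≠ 0 ∨ A 1 1 - A 0 0 ≠ 0 := by tauto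
      rcases this with h | h | h
      · obtain ⟨n, hn⟩ := exists_not_pow_dvd h; exact ⟨n, fun hP => hn hP.1⟩
      · obtain ⟨n, hn⟩ := exists_not_pow_dvd h; exact ⟨n, fun hP => hn hP.2.1⟩
      · obtain ⟨n, hn⟩ := exists_not_pow_dvd h; exact ⟨n, fun hP => hn hP.2.2⟩
    obtain ⟨n, hn⟩ := hex
    set μ := Nat.findGreatest PA n with hμdef
    have hP0 : PA 0 := by
      refine ⟨?_, ?_, ?_⟩ <;> simp
    have hμ1 : PA μ := Nat.findGreatest_spec (Nat.zero_le n) hP0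
    have hμ2 : ¬ PA (μ + 1) := by
      intro hcontra
      rcases le_or_gt (μ + 1) n with h | h
      · exact Nat.findGreatest_is_greatest (Nat.lt_succ_self μ) h hcontra
      · exact hn (hanti (by omega) hcontra)
    have hB1 : (p:ℤ_[p])^μ ∣ B 0 1 ∧ (p:ℤ_[p])^μ ∣ B 1 0 ∧
        (p:ℤ_[p])^μ ∣ (B 1 1 - B 0 0) := (hm μ).mp hμ1
    have hB2 : ¬ ((p:ℤ_[p])^(μ+1) ∣ B 0 1 ∧ (p:ℤ_[p])^(μ+1) ∣ B 1 0 ∧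
        (p:ℤ_[p])^(μ+1) ∣ (B 1 1 - B 0 0)) := fun h => hμ2 ((hm (μ+1)).mpr h)
    obtain ⟨b₁, hb₁⟩ := hμ1.1
    obtain ⟨c₁, hc₁⟩ := hμ1.2.1
    obtain ⟨e₁, he₁⟩ := hμ1.2.2
    obtain ⟨b₂, hb₂⟩ := hB1.1
    obtain ⟨c₂, hc₂⟩ := hB1.2.1
    obtain ⟨e₂, he₂⟩ := hB1.2.2
    set α := A 0 0 with hαdef
    set β := B 0 0 with hβdef
    set A' : M2 := !![0, b₁; c₁, e₁] with hA'def
    set B' : M2 := !![0, b₂; c₂, e₂] with hB'def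
    have hA : A = α • (1 : M2) + (p:ℤ_[p])^μ • A' := by
      ext i j
      fin_cases i <;> fin_cases j <;>
        simp [hA'def, Matrix.one_apply, hαdef]
      · exact hb₁
      · exact hc₁
      · linear_combination he₁
    have hB : B = β • (1 : M2) + (p:ℤ_[p])^μ • B' := by
      ext i j
      fin_cases i <;> fin_cases j <;>
        simp [hB'def, Matrix.one_apply, hβdef]
      · exact hb₂
      · exact hc₂
      · linear_combination he₂
    have htrA' : A'.trace = e₁ := by simp [hA'def, Matrix.trace_fin_two]
    have htrB' : B'.trace = e₂ := by simp [hB'def, Matrix.trace_fin_two]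
    -- nonscalarity of A' mod p
    have hnsA' : ¬((p : ℤ_[p]) ∣ A' 0 1 ∧ (p : ℤ_[p]) ∣ A' 1 0 ∧
        (p : ℤ_[p]) ∣ (A' 1 1 - A' 0 0)) := by
      rintro ⟨u1, u2, u3⟩
      simp [hA'def] at u1 u2 u3
      refine hμ2 ⟨?_, ?_, ?_⟩
      · rw [hb₁, pow_succ]; exact mul_dvd_mul_left _ u1
      · rw [hc₁, pow_succ]; exact mul_dvd_mul_left _ u2
      · rw [he₁, pow_succ]; exact mul_dvd_mul_left _ u3
    have hnsB' : ¬((p : ℤ_[p]) ∣ B' 0 1 ∧ (p : ℤ_[p]) ∣ B' 1 0 ∧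
        (p : ℤ_[p]) ∣ (B' 1 1 - B' 0 0)) := by
      rintro ⟨u1, u2, u3⟩
      simp [hB'def] at u1 u2 u3
      refine hB2 ⟨?_, ?_, ?_⟩
      · rw [hb₂, pow_succ]; exact mul_dvd_mul_left _ u1
      · rw [hc₂, pow_succ]; exact mul_dvd_mul_left _ u2
      · rw [he₂, pow_succ]; exact mul_dvd_mul_left _ u3
    -- p^μ divides β - α
    have hdd : (p:ℤ_[p])^μ ∣ (β - α) := by
      apply dvd_of_sq μ (β - α) e₁
      have e1 : (β • (1:M2) + (-1 : ℤ_[p]) • A).det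
          = β^2 + β * (-1) * A.trace + (-1)^2 * A.det := det_smul_one_add _ _ _
      have e2 : (β • (1:M2) + (-1 : ℤ_[p]) • B).det
          = β^2 + β * (-1) * B.trace + (-1)^2 * B.det := det_smul_one_add _ _ _
      have e3 : (β • (1:M2) + (-1 : ℤ_[p]) • A)
          = ((β - α) • (1:M2) + (-(p:ℤ_[p])^μ) • A') := by
        rw [hA]; module
      have e4 : (β • (1:M2) + (-1 : ℤ_[p]) • B)
          = ((0 : ℤ_[p]) • (1:M2) + (-(p:ℤ_[p])^μ) • B') := by
        rw [hB]; module
      have e5 : ((β - α) • (1:M2) + (-(p:ℤ_[p])^μ) • A').det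
          = (β-α)^2 + (β-α) * (-(p:ℤ_[p])^μ) * e₁ + (-(p:ℤ_[p])^μ)^2 * A'.det := by
        rw [det_smul_one_add, htrA']
      have e6 : ((0:ℤ_[p]) • (1:M2) + (-(p:ℤ_[p])^μ) • B').det
          = (-(p:ℤ_[p])^μ)^2 * B'.det := by
        rw [det_smul_one_add]; ring
      refine ⟨B'.det - A'.det, ?_⟩
      have key : (β-α)^2 + (β-α) * (-(p:ℤ_[p])^μ) * e₁ + (-(p:ℤ_[p])^μ)^2 * A'.det
          = (-(p:ℤ_[p])^μ)^2 * B'.det := by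
        rw [← e5, ← e6, ← e3, ← e4, e1, e2, ht, hd]
      have hpow : (p:ℤ_[p])^(2*μ) = (p:ℤ_[p])^μ * (p:ℤ_[p])^μ := by
        rw [two_mul, pow_add]
      rw [hpow]
      linear_combination key
    obtain ⟨δ, hδ⟩ := hdd
    set B'' : M2 := δ • (1:M2) + B' with hB''def
    have hβα : β = α + (p:ℤ_[p])^μ * δ := by linear_combination hδ
    have hBalt : B = α • (1 : M2) + (p:ℤ_[p])^μ • B'' := by
      rw [hB, hβα, hB''def]; module
    -- trace equality for primed matrices
    have htr' : A'.trace = B''.trace := by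
      have h1 : (α • (1:M2) + (p:ℤ_[p])^μ • A').trace
          = (α • (1:M2) + (p:ℤ_[p])^μ • B'').trace := by rw [← hA, ← hBalt]; exact ht
      rw [trace_smul_one_add, trace_smul_one_add] at h1
      exact mul_left_cancel₀ (hpμne μ) (by linear_combination h1)
    have hdet' : A'.det = B''.det := by
      have h1 : (α • (1:M2) + (p:ℤ_[p])^μ • A').det
          = (α • (1:M2) + (p:ℤ_[p])^μ • B'').det := by rw [← hA, ← hBalt]; exact hd
      rw [det_smul_one_add, det_smul_one_add] at h1
      have hsq : ((p:ℤ_[p])^μ)^2 ≠ 0 := pow_ne_zero _ (hpμne μ)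
      exact mul_left_cancel₀ hsq (by linear_combination h1 - α * (p:ℤ_[p])^μ * htr')
    -- nonscalarity of B'' mod p
    have hnsB'' : ¬((p : ℤ_[p]) ∣ B'' 0 1 ∧ (p : ℤ_[p]) ∣ B'' 1 0 ∧
        (p : ℤ_[p]) ∣ (B'' 1 1 - B'' 0 0)) := by
      rintro ⟨u1, u2, u3⟩
      apply hnsB'
      have k1 : B'' 0 1 = B' 0 1 := by simp [hB''def, Matrix.one_apply]
      have k2 : B'' 1 0 = B' 1 0 := by simp [hB''def, Matrix.one_apply]
      have k3 : B'' 1 1 - B'' 0 0 = B' 1 1 - B' 0 0 := by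
        simp [hB''def, Matrix.one_apply]; try ring
      rw [k1] at u1; rw [k2] at u2; rw [k3] at u3
      exact ⟨u1, u2, u3⟩
    obtain ⟨u, hu⟩ := companion A' hnsA'
    obtain ⟨w, hw⟩ := companion B'' hnsB''
    rw [← hdet', ← htr'] at hw
    have hfin : (↑u⁻¹ : M2) * A * (↑u : M2) = (↑w⁻¹ : M2) * B * (↑w : M2) := by
      rw [hA, hBalt, conj_smul_add, conj_smul_add, hu, hw]
    refine ⟨u * w⁻¹, ?_⟩
    have hgoal : (↑(u * w⁻¹)⁻¹ : M2) = (↑w : M2) * (↑u⁻¹ : M2) := by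
      rw [_root_.mul_inv_rev, inv_inv, Units.val_mul]
    have hgoal2 : (↑(u * w⁻¹) : M2) = (↑u : M2) * (↑w⁻¹ : M2) := Units.val_mul _ _
    rw [hgoal, hgoal2]
    calc (↑w : M2) * (↑u⁻¹ : M2) * A * ((↑u : M2) * (↑w⁻¹ : M2))
        = (↑w : M2) * ((↑u⁻¹ : M2) * A * (↑u : M2)) * (↑w⁻¹ : M2) := by
          simp only [mul_assoc]
      _ = (↑w : M2) * ((↑w⁻¹ : M2) * B * (↑w : M2)) * (↑w⁻¹ : M2) := by rw [hfin]
      _ = ((↑w : M2) * (↑w⁻¹ : M2)) * B * ((↑w : M2) * (↑w⁻¹ : M2)) := by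
          simp only [mul_assoc]
      _ = B := by rw [w.mul_inv, one_mul, mul_one]

end Stmt4Aux

open Stmt4Aux in
/-- Two matrices `A, B ∈ GL₂(ℤ_p)` are conjugate iff they have the same characteristic
polynomial and `μ(A) = μ(B)`, where `μ(A)` is the largest `μ ∈ ℤ≥0 ∪ {∞}` such that `A` is
congruent to a scalar matrix modulo `p^μ`.  Having `μ(A) = μ(B)` is expressed by saying that
`A` is scalar mod `p^m` exactly when `B` is, for every `m`. -/
theorem stmt_4 (p : ℕ) [Fact p.Prime] (A B : GL (Fin 2) ℤ_[p]) :
    IsConj A B ↔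
      ((A : Matrix (Fin 2) (Fin 2) ℤ_[p]).charpoly =
          (B : Matrix (Fin 2) (Fin 2) ℤ_[p]).charpoly ∧
        ∀ m : ℕ,
          (∃ α : ℤ_[p], ∀ i j, (p : ℤ_[p]) ^ m ∣
              ((A : Matrix (Fin 2) (Fin 2) ℤ_[p]) i j -
                (α • (1 : Matrix (Fin 2) (Fin 2) ℤ_[p])) i j)) ↔
          (∃ α : ℤ_[p], ∀ i j, (p : ℤ_[p]) ^ m ∣
              ((B : Matrix (Fin 2) (Fin 2) ℤ_[p]) i j -
                (α • (1 : Matrix (Fin 2) (Fin 2) ℤ_[p])) i j))) := by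
  set A₀ : Matrix (Fin 2) (Fin 2) ℤ_[p] := (A : Matrix (Fin 2) (Fin 2) ℤ_[p]) with hA₀
  set B₀ : Matrix (Fin 2) (Fin 2) ℤ_[p] := (B : Matrix (Fin 2) (Fin 2) ℤ_[p]) with hB₀
  constructor
  · intro h
    obtain ⟨c, hc⟩ := isConj_iff.mp h
    have hmat : (↑c : Matrix (Fin 2) (Fin 2) ℤ_[p]) * A₀ * (↑c⁻¹ : Matrix (Fin 2) (Fin 2) ℤ_[p])
        = B₀ := by
      rw [hA₀, hB₀, ← hc]
      rfl
    have hcc : (↑c : Matrix (Fin 2) (Fin 2) ℤ_[p]) * (↑c⁻¹ : Matrix (Fin 2) (Fin 2) ℤ_[p]) = 1 :=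
      c.mul_inv
    have hcc' : (↑c⁻¹ : Matrix (Fin 2) (Fin 2) ℤ_[p]) * (↑c : Matrix (Fin 2) (Fin 2) ℤ_[p]) = 1 :=
      c.inv_mul
    constructor
    · rw [charpoly_eq_iff]
      constructor
      · rw [← hmat, Matrix.trace_mul_comm, ← mul_assoc, hcc', one_mul]
      · rw [← hmat, Matrix.det_mul, Matrix.det_mul, mul_comm, ← mul_assoc, ← Matrix.det_mul, hcc',
          Matrix.det_one, one_mul]
    · intro m
      constructor
      · rintro ⟨α, hα⟩
        refine ⟨α, fun i j => ?_⟩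
        have hsub : B₀ - α • (1 : Matrix (Fin 2) (Fin 2) ℤ_[p])
            = (↑c : Matrix (Fin 2) (Fin 2) ℤ_[p]) * (A₀ - α • 1)
              * (↑c⁻¹ : Matrix (Fin 2) (Fin 2) ℤ_[p]) := by
          rw [Matrix.mul_sub, Matrix.sub_mul, hmat]
          congr 1
          rw [mul_smul_comm, smul_mul_assoc, mul_one, hcc]
        have := dvd_conj_entries ((p:ℤ_[p])^m) (↑c) (A₀ - α • 1) (↑c⁻¹)
          (fun i j => by simpa [Matrix.sub_apply] using hα i j) i j
        rw [← hsub] at this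
        simpa [Matrix.sub_apply] using this
      · rintro ⟨α, hα⟩
        refine ⟨α, fun i j => ?_⟩
        have hmat' : (↑c⁻¹ : Matrix (Fin 2) (Fin 2) ℤ_[p]) * B₀
            * (↑c : Matrix (Fin 2) (Fin 2) ℤ_[p]) = A₀ := by
          rw [← hmat]
          calc (↑c⁻¹ : Matrix (Fin 2) (Fin 2) ℤ_[p]) * ((↑c : Matrix (Fin 2) (Fin 2) ℤ_[p]) * A₀
                * (↑c⁻¹ : Matrix (Fin 2) (Fin 2) ℤ_[p])) * (↑c : Matrix (Fin 2) (Fin 2) ℤ_[p])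
              = ((↑c⁻¹ : Matrix (Fin 2) (Fin 2) ℤ_[p]) * (↑c : Matrix (Fin 2) (Fin 2) ℤ_[p])) * A₀
                * ((↑c⁻¹ : Matrix (Fin 2) (Fin 2) ℤ_[p]) * (↑c : Matrix (Fin 2) (Fin 2) ℤ_[p])) := by
                simp only [mul_assoc]
            _ = A₀ := by rw [hcc', one_mul, mul_one]
        have hsub : A₀ - α • (1 : Matrix (Fin 2) (Fin 2) ℤ_[p])
            = (↑c⁻¹ : Matrix (Fin 2) (Fin 2) ℤ_[p]) * (B₀ - α • 1)
              * (↑c : Matrix (Fin 2) (Fin 2) ℤ_[p]) := by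
          rw [Matrix.mul_sub, Matrix.sub_mul, hmat']
          congr 1
          rw [mul_smul_comm, smul_mul_assoc, mul_one, hcc']
        have := dvd_conj_entries ((p:ℤ_[p])^m) (↑c⁻¹) (B₀ - α • 1) (↑c)
          (fun i j => by simpa [Matrix.sub_apply] using hα i j) i j
        rw [← hsub] at this
        simpa [Matrix.sub_apply] using this
  · rintro ⟨hχ, hm⟩
    rw [charpoly_eq_iff] at hχ
    have hm' : ∀ m : ℕ,
        ((p:ℤ_[p])^m ∣ A₀ 0 1 ∧ (p:ℤ_[p])^m ∣ A₀ 1 0 ∧ (p:ℤ_[p])^m ∣ (A₀ 1 1 - A₀ 0 0)) ↔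
        ((p:ℤ_[p])^m ∣ B₀ 0 1 ∧ (p:ℤ_[p])^m ∣ B₀ 1 0 ∧ (p:ℤ_[p])^m ∣ (B₀ 1 1 - B₀ 0 0)) := by
      intro m
      rw [← cond_iff, ← cond_iff]
      exact hm m
    obtain ⟨P, hP⟩ := main_back A₀ B₀ hχ.1 hχ.2 hm'
    rw [isConj_iff]
    refine ⟨P⁻¹, ?_⟩
    rw [inv_inv]
    apply Units.ext
    rw [Units.val_mul, Units.val_mul]
    exact hP
end

section
/- Let p be an odd prime, n ≥ 1, μ with 1 ≤ μ < n, α ∈ (ℤ/p^n)^× and β ∈ (ℤ/p^{n-μ})^× a square. Then the centralizer in GL₂(ℤ/p^n) of the matrix with rows (α, βp^μ) and (p^μ, α) has order (p-1)²p^{2n-2+2μ}, and hence its conjugacy class has size (p+1)p^{2(n-μ)-1}. -/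
theorem card_comap {A B : Type*} [Fintype A] [Fintype B] [DecidableEq B] (f : A → B) (k : ℕ)
    (hf : ∀ b : B, Nat.card {a : A // f a = b} = k) (P : B → Prop) [DecidablePred P] :
    Nat.card {a : A // P (f a)} = k * Nat.card {b : B // P b} := by
  classical
  simp only [Nat.card_eq_fintype_card, Fintype.card_subtype] at *
  rw [Finset.card_eq_sum_card_fiberwise (f := f) (t := Finset.univ.filter P)
    (fun x hx => by simpa using (Finset.mem_filter.mp hx).2)]
  rw [Finset.sum_congr rfl (fun b hb => ?_), Finset.sum_const, smul_eq_mul, mul_comm]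
  rw [← hf b]
  congr 1
  ext a
  simp only [Finset.mem_filter, Finset.mem_univ, true_and, and_iff_right_iff_imp]
  rintro rfl
  exact (Finset.mem_filter.mp hb).2

theorem card_fiber_mul {A B : Type*} [AddCommGroup A] [AddCommGroup B] [Fintype A] [Fintype B]
    (f : A →+ B) (hf : Function.Surjective f) (b : B) :
    Nat.card {a : A // f a = b} * Nat.card B = Nat.card A := by
  classical
  obtain ⟨a₀, ha₀⟩ := hf b
  have e : {a : A // f a = b} ≃ f.ker :=
    { toFun := fun x => ⟨x.1 - a₀, by simp [AddMonoidHom.mem_ker, x.2, ha₀]⟩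
      invFun := fun y => ⟨y.1 + a₀, by
        have := y.2
        rw [AddMonoidHom.mem_ker] at this
        simp [this, ha₀]⟩
      left_inv := fun x => by simp
      right_inv := fun y => by simp }
  rw [Nat.card_congr e, mul_comm,
    ← Nat.card_congr (QuotientAddGroup.quotientKerEquivOfSurjective f hf).toEquiv]
  exact (AddSubgroup.card_eq_card_quotient_mul_card_addSubgroup f.ker).symm

section zmod
variable (p n : ℕ) [Fact p.Prime]

theorem zmod_fiber_card (hn : 1 ≤ n) (h : p ∣ p ^ n) (b : ZMod p) :
    Nat.card {a : ZMod (p ^ n) // ZMod.castHom h (ZMod p) a = b} = p ^ (n - 1) := by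
  haveI : NeZero (p ^ n) := ⟨pow_ne_zero n (Fact.out : p.Prime).ne_zero⟩
  have hsurj : Function.Surjective ((ZMod.castHom h (ZMod p)).toAddMonoidHom) := by
    intro y
    obtain ⟨k, rfl⟩ := ZMod.natCast_zmod_surjective y
    exact ⟨(k : ZMod (p ^ n)), by simp⟩
  have := card_fiber_mul ((ZMod.castHom h (ZMod p)).toAddMonoidHom) hsurj b
  simp only [Nat.card_zmod, RingHom.toAddMonoidHom_eq_coe, AddMonoidHom.coe_coe] at this
  have hp : 0 < p := (Fact.out : p.Prime).pos
  have hpow : p ^ n = p ^ (n - 1) * p := by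
    rw [← pow_succ]
    congr 1
    omega
  exact Nat.eq_of_mul_eq_mul_right hp (this.trans hpow)

theorem zmod_isUnit_iff (hn : 1 ≤ n) (h : p ∣ p ^ n) (x : ZMod (p ^ n)) :
    IsUnit x ↔ IsUnit (ZMod.castHom h (ZMod p) x) := by
  haveI : NeZero (p ^ n) := ⟨pow_ne_zero n (Fact.out : p.Prime).ne_zero⟩
  conv_lhs => rw [← ZMod.natCast_zmod_val x]
  have h2 : ZMod.castHom h (ZMod p) x = ((x.val : ℕ) : ZMod p) := by
    conv_lhs => rw [← ZMod.natCast_zmod_val x]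
    simp
  rw [h2, ZMod.isUnit_iff_coprime, ZMod.isUnit_iff_coprime,
    Nat.coprime_pow_right_iff (by omega)]

theorem zmod_pow_mul_eq_zero_iff (μ : ℕ) (hμ : μ ≤ n) (x : ZMod (p ^ n)) :
    (p : ZMod (p ^ n)) ^ μ * x = 0 ↔ p ^ (n - μ) ∣ x.val := by
  haveI : NeZero (p ^ n) := ⟨pow_ne_zero n (Fact.out : p.Prime).ne_zero⟩
  conv_lhs => rw [← ZMod.natCast_zmod_val x]
  have : (p : ZMod (p ^ n)) ^ μ * (x.val : ZMod (p ^ n)) = ((p ^ μ * x.val : ℕ) : ZMod (p ^ n)) := by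
    push_cast; ring
  rw [this, ZMod.natCast_eq_zero_iff]
  have hsplit : p ^ n = p ^ μ * p ^ (n - μ) := by
    rw [← pow_add]; congr 1; omega
  conv_lhs => lhs; rw [hsplit]
  exact Nat.mul_dvd_mul_iff_left (pow_pos (Fact.out : p.Prime).pos μ)
end zmod

theorem zmod_ann_card (p n : ℕ) [Fact p.Prime] (μ : ℕ) (hμ : μ ≤ n) :
    Nat.card {x : ZMod (p ^ n) // (p : ZMod (p ^ n)) ^ μ * x = 0} = p ^ μ := by
  haveI : NeZero (p ^ n) := ⟨pow_ne_zero n (Fact.out : p.Prime).ne_zero⟩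
  haveI : NeZero (p ^ μ) := ⟨pow_ne_zero μ (Fact.out : p.Prime).ne_zero⟩
  have hppos : 0 < p := (Fact.out : p.Prime).pos
  have hpos : 0 < p ^ (n - μ) := pow_pos hppos _
  have hsplit : p ^ n = p ^ (n - μ) * p ^ μ := by rw [← pow_add]; congr 1; omega
  have hdvd : ∀ x : ZMod (p ^ n), (p : ZMod (p ^ n)) ^ μ * x = 0 ↔ p ^ (n - μ) ∣ x.val := by
    intro x
    conv_lhs => rw [← ZMod.natCast_zmod_val x]
    have : (p : ZMod (p ^ n)) ^ μ * (x.val : ZMod (p ^ n)) =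
        ((p ^ μ * x.val : ℕ) : ZMod (p ^ n)) := by push_cast; ring
    rw [this, ZMod.natCast_eq_zero_iff]
    have hsplit2 : p ^ n = p ^ μ * p ^ (n - μ) := by rw [← pow_add]; congr 1; omega
    conv_lhs => lhs; rw [hsplit2]
    exact Nat.mul_dvd_mul_iff_left (pow_pos hppos μ)
  have e : {x : ZMod (p ^ n) // (p : ZMod (p ^ n)) ^ μ * x = 0} ≃ ZMod (p ^ μ) :=
    { toFun := fun x => ((x.1.val / p ^ (n - μ) : ℕ) : ZMod (p ^ μ))
      invFun := fun y => ⟨((y.val * p ^ (n - μ) : ℕ) : ZMod (p ^ n)), by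
        rw [hdvd, ZMod.val_cast_of_lt]
        · exact dvd_mul_left _ _
        · calc y.val * p ^ (n - μ) < p ^ μ * p ^ (n - μ) :=
                Nat.mul_lt_mul_of_lt_of_le (ZMod.val_lt y) le_rfl hpos
            _ = p ^ n := by rw [← pow_add]; congr 1; omega⟩
      left_inv := fun x => by
        obtain ⟨d, hd⟩ := (hdvd x.1).mp x.2
        apply Subtype.ext
        simp only
        rw [ZMod.val_cast_of_lt, Nat.div_mul_cancel ((hdvd x.1).mp x.2), ZMod.natCast_zmod_val]
        exact Nat.div_lt_of_lt_mul ((ZMod.val_lt x.1).trans_eq hsplit)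
      right_inv := fun y => by
        have hlt : y.val * p ^ (n - μ) < p ^ n := by
          calc y.val * p ^ (n - μ) < p ^ μ * p ^ (n - μ) :=
                Nat.mul_lt_mul_of_lt_of_le (ZMod.val_lt y) le_rfl hpos
            _ = p ^ n := by rw [← pow_add]; congr 1; omega
        show ((((y.val * p ^ (n - μ) : ℕ) : ZMod (p ^ n)).val / p ^ (n - μ) : ℕ) : ZMod (p ^ μ)) = y
        rw [ZMod.val_cast_of_lt hlt, Nat.mul_div_cancel _ hpos, ZMod.natCast_zmod_val] }
  rw [Nat.card_congr e, Nat.card_zmod]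

theorem field_pair_card (p : ℕ) [Fact p.Prime] (hp : p ≠ 2) (δ : ZMod p) (hδ : IsUnit δ) :
    Nat.card {w : ZMod p × ZMod p // IsUnit (w.1 ^ 2 - δ ^ 2 * w.2 ^ 2)} = (p - 1) ^ 2 := by
  have hδ0 : δ ≠ 0 := hδ.ne_zero
  have h2 : (2 : ZMod p) ≠ 0 := by
    have : ((2 : ℕ) : ZMod p) ≠ 0 := by
      rw [Ne, ZMod.natCast_eq_zero_iff]
      exact fun h => hp ((Nat.prime_dvd_prime_iff_eq (Fact.out : p.Prime) Nat.prime_two).mp h)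
    simpa using this
  let E : (ZMod p × ZMod p) ≃ (ZMod p × ZMod p) :=
    { toFun := fun w => (w.1 - δ * w.2, w.1 + δ * w.2)
      invFun := fun u => ((u.1 + u.2) / 2, (u.2 - u.1) / (2 * δ))
      left_inv := fun w => by
        apply Prod.ext <;> field_simp <;> ring
      right_inv := fun u => by
        apply Prod.ext <;> field_simp <;> ring }
  have key : ∀ w : ZMod p × ZMod p,
      IsUnit (w.1 ^ 2 - δ ^ 2 * w.2 ^ 2) ↔ ((E w).1 ≠ 0 ∧ (E w).2 ≠ 0) := by
    intro w
    have : w.1 ^ 2 - δ ^ 2 * w.2 ^ 2 = (w.1 - δ * w.2) * (w.1 + δ * w.2) := by ring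
    rw [this, isUnit_iff_ne_zero, mul_ne_zero_iff]
    rfl
  rw [Nat.card_congr ((Equiv.subtypeEquiv E key).trans
    (Equiv.subtypeProdEquivProd (p := fun u : ZMod p => u ≠ 0) (q := fun v : ZMod p => v ≠ 0))),
    Nat.card_prod]
  have : Nat.card {u : ZMod p // u ≠ 0} = p - 1 := by
    rw [Nat.card_eq_fintype_card, Fintype.card_subtype_compl, ZMod.card, Fintype.card_subtype_eq]
  rw [this, sq]

open Matrix

noncomputable def glEquiv (R : Type*) [CommRing R] [DecidableEq R] :
    GL (Fin 2) R ≃ {X : Matrix (Fin 2) (Fin 2) R // IsUnit X.det} := by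
  apply Equiv.ofBijective (fun u => ⟨(u : Matrix (Fin 2) (Fin 2) R),
    (Matrix.isUnit_iff_isUnit_det _).mp u.isUnit⟩)
  constructor
  · intro u v h
    exact Units.ext (congrArg Subtype.val h)
  · rintro ⟨X, hX⟩
    obtain ⟨u, hu⟩ := (Matrix.isUnit_iff_isUnit_det X).mpr hX
    exact ⟨u, Subtype.ext hu⟩

def matFiberEquiv {R S : Type*} (f : R → S) (Y : Matrix (Fin 2) (Fin 2) S) :
    {X : Matrix (Fin 2) (Fin 2) R // X.map f = Y} ≃
      ({a : R // f a = Y 0 0} × {a : R // f a = Y 0 1} ×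
       {a : R // f a = Y 1 0} × {a : R // f a = Y 1 1}) where
  toFun X := ⟨⟨X.1 0 0, by rw [← Matrix.map_apply (f := f), X.2]⟩,
    ⟨X.1 0 1, by rw [← Matrix.map_apply (f := f), X.2]⟩,
    ⟨X.1 1 0, by rw [← Matrix.map_apply (f := f), X.2]⟩,
    ⟨X.1 1 1, by rw [← Matrix.map_apply (f := f), X.2]⟩⟩
  invFun q := ⟨!![q.1.1, q.2.1.1; q.2.2.1.1, q.2.2.2.1], by
    ext i j
    fin_cases i <;> fin_cases j <;>
      simp [Matrix.map_apply, q.1.2, q.2.1.2, q.2.2.1.2, q.2.2.2.2]⟩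
  left_inv X := by
    apply Subtype.ext
    exact (Matrix.eta_fin_two X.1).symm
  right_inv q := by
    obtain ⟨⟨a, ha⟩, ⟨b, hb⟩, ⟨c, hc⟩, ⟨d, hd⟩⟩ := q
    simp

theorem card_GL_zmod (p n : ℕ) [Fact p.Prime] (hn : 1 ≤ n) (h : p ∣ p ^ n) :
    Nat.card (GL (Fin 2) (ZMod (p ^ n))) =
      (p ^ (n - 1)) ^ 4 * ((p ^ 2 - 1) * (p ^ 2 - p)) := by
  classical
  haveI : NeZero (p ^ n) := ⟨pow_ne_zero n (Fact.out : p.Prime).ne_zero⟩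
  set π := ZMod.castHom h (ZMod p) with hπ
  rw [Nat.card_congr (glEquiv (ZMod (p ^ n)))]
  have hpred : ∀ X : Matrix (Fin 2) (Fin 2) (ZMod (p ^ n)),
      IsUnit X.det ↔ IsUnit (X.map π).det := by
    intro X
    rw [zmod_isUnit_iff p n hn h X.det]
    rw [show (X.map ⇑π) = π.mapMatrix X from (RingHom.mapMatrix_apply π X).symm,
      ← RingHom.map_det]
  have hcongr : Nat.card {X : Matrix (Fin 2) (Fin 2) (ZMod (p ^ n)) // IsUnit X.det} =
      Nat.card {X : Matrix (Fin 2) (Fin 2) (ZMod (p ^ n)) //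
        (fun Y : Matrix (Fin 2) (Fin 2) (ZMod p) => IsUnit Y.det) ((fun X : Matrix (Fin 2) (Fin 2) (ZMod (p ^ n)) => X.map ⇑π) X)} :=
    Nat.card_congr (Equiv.subtypeEquiv (Equiv.refl _) (fun X => hpred X))
  rw [hcongr, card_comap (fun X : Matrix (Fin 2) (Fin 2) (ZMod (p ^ n)) => X.map ⇑π)
    ((p ^ (n - 1)) ^ 4) ?hfib (fun Y => IsUnit Y.det)]
  · congr 1
    have e2 := glEquiv (ZMod p)
    rw [← Nat.card_congr e2, Matrix.card_GL_field]
    simp [Fin.prod_univ_two, ZMod.card]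
  case hfib =>
    intro Y
    rw [Nat.card_congr (matFiberEquiv (⇑π) Y), Nat.card_prod, Nat.card_prod, Nat.card_prod]
    rw [zmod_fiber_card p n hn h, zmod_fiber_card p n hn h, zmod_fiber_card p n hn h,
      zmod_fiber_card p n hn h]
    ring

theorem comm_iff {R : Type*} [CommRing R] (α β P : R) (X : Matrix (Fin 2) (Fin 2) R) :
    X * !![α, β * P; P, α] = !![α, β * P; P, α] * X ↔
      (P * (X 1 1 - X 0 0) = 0 ∧ P * (X 0 1 - β * X 1 0) = 0) := by
  constructor
  · intro H
    have H10 := congrFun (congrFun H 1) 0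
    have H00 := congrFun (congrFun H 0) 0
    simp [Matrix.mul_apply, Fin.sum_univ_two] at H10 H00
    constructor
    · linear_combination H10
    · linear_combination H00
  · rintro ⟨h1, h2⟩
    ext i j
    fin_cases i <;> fin_cases j
    · simp [Matrix.mul_apply, Fin.sum_univ_two]
      linear_combination h2
    · simp [Matrix.mul_apply, Fin.sum_univ_two]
      linear_combination (-β) * h1
    · simp [Matrix.mul_apply, Fin.sum_univ_two]
      linear_combination h1
    · simp [Matrix.mul_apply, Fin.sum_univ_two]
      linear_combination -h2

def prodFiberEquiv {A B C D : Type*} (f : A → B) (g : C → D) (b : B) (d : D) :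
    {v : A × C // (f v.1, g v.2) = (b, d)} ≃ ({a : A // f a = b} × {c : C // g c = d}) where
  toFun v := (⟨v.1.1, congrArg Prod.fst v.2⟩, ⟨v.1.2, congrArg Prod.snd v.2⟩)
  invFun x := ⟨(x.1.1, x.2.1), by rw [x.1.2, x.2.2]⟩
  left_inv v := rfl
  right_inv x := rfl

theorem cent_card (p n μ : ℕ) [Fact p.Prime] (hp : p ≠ 2) (hn : 1 ≤ n) (hμ1 : 1 ≤ μ)
    (hμn : μ < n) (h : p ∣ p ^ n) (α β : ZMod (p ^ n))
    (hβsq' : ∃ δ : ZMod p, IsUnit δ ∧ ZMod.castHom h (ZMod p) β = δ ^ 2)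
    (g : GL (Fin 2) (ZMod (p ^ n)))
    (hg : (g : Matrix (Fin 2) (Fin 2) (ZMod (p ^ n))) =
        !![α, β * (p : ZMod (p ^ n)) ^ μ; (p : ZMod (p ^ n)) ^ μ, α]) :
    Nat.card (Subgroup.centralizer {g}) =
      ((p ^ (n - 1) * p ^ (n - 1)) * (p - 1) ^ 2) * (p ^ μ * p ^ μ) := by
  classical
  haveI : NeZero (p ^ n) := ⟨pow_ne_zero n (Fact.out : p.Prime).ne_zero⟩
  set π := ZMod.castHom h (ZMod p) with hπdef
  set P : ZMod (p ^ n) := (p : ZMod (p ^ n)) ^ μ with hPdef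
  set M : Matrix (Fin 2) (Fin 2) (ZMod (p ^ n)) := !![α, β * P; P, α] with hMdef
  have ann_pi : ∀ s : ZMod (p ^ n), P * s = 0 → π s = 0 := by
    intro s hs
    have hdvd : p ^ (n - μ) ∣ s.val := (zmod_pow_mul_eq_zero_iff p n μ (le_of_lt hμn) s).mp hs
    have hv : π s = ((s.val : ℕ) : ZMod p) := by
      conv_lhs => rw [← ZMod.natCast_zmod_val s]
      simp [hπdef]
    rw [hv, ZMod.natCast_eq_zero_iff]
    exact dvd_trans (dvd_pow_self p (by omega)) hdvd
  have hmem : ∀ x : GL (Fin 2) (ZMod (p ^ n)), x ∈ Subgroup.centralizer {g} ↔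
      (x : Matrix (Fin 2) (Fin 2) (ZMod (p ^ n))) * M = M * x := by
    intro x
    rw [Subgroup.mem_centralizer_iff]
    constructor
    · intro hx
      have := hx g rfl
      have hmat := congrArg Units.val this
      rw [Units.val_mul, Units.val_mul, hg] at hmat
      exact hmat.symm
    · intro hx j hj
      rw [Set.mem_singleton_iff] at hj
      subst hj
      apply Units.ext
      rw [Units.val_mul, Units.val_mul, hg]
      exact hx.symm
  have e1 : Subgroup.centralizer {g} ≃
      {X : Matrix (Fin 2) (Fin 2) (ZMod (p ^ n)) // X * M = M * X ∧ IsUnit X.det} := by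
    apply Equiv.ofBijective (fun x => ⟨(x.1 : Matrix (Fin 2) (Fin 2) (ZMod (p ^ n))),
      (hmem x.1).mp x.2, (Matrix.isUnit_iff_isUnit_det _).mp x.1.isUnit⟩)
    constructor
    · intro x y hxy
      have : (x.1 : Matrix (Fin 2) (Fin 2) (ZMod (p ^ n))) = y.1 := congrArg Subtype.val hxy
      exact Subtype.ext (Units.ext this)
    · rintro ⟨X, hcomm, hdet⟩
      obtain ⟨u, hu⟩ := (Matrix.isUnit_iff_isUnit_det X).mpr hdet
      refine ⟨⟨u, (hmem u).mpr (by rw [hu]; exact hcomm)⟩, Subtype.ext hu⟩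
  have det_iff : ∀ a c s t : ZMod (p ^ n), P * s = 0 → P * t = 0 →
      (IsUnit (!![a, β * c + t; c, a + s]).det ↔ IsUnit ((π a) ^ 2 - π β * (π c) ^ 2)) := by
    intro a c s t hs ht
    rw [Matrix.det_fin_two_of, zmod_isUnit_iff p n hn h]
    have hval : π (a * (a + s) - (β * c + t) * c) = (π a) ^ 2 - π β * (π c) ^ 2 := by
      simp only [map_sub, _root_.map_mul, map_add]
      rw [ann_pi s hs, ann_pi t ht]
      ring
    rw [hval]
  have e2 : {X : Matrix (Fin 2) (Fin 2) (ZMod (p ^ n)) // X * M = M * X ∧ IsUnit X.det} ≃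
      ({v : ZMod (p ^ n) × ZMod (p ^ n) // IsUnit ((π v.1) ^ 2 - π β * (π v.2) ^ 2)} ×
        {x : ZMod (p ^ n) // P * x = 0} × {x : ZMod (p ^ n) // P * x = 0}) :=
    { toFun := fun X =>
        ⟨⟨(X.1 0 0, X.1 1 0), by
          have hc := (comm_iff α β P X.1).mp X.2.1
          have hX : X.1 = !![X.1 0 0, β * X.1 1 0 + (X.1 0 1 - β * X.1 1 0);
              X.1 1 0, X.1 0 0 + (X.1 1 1 - X.1 0 0)] := by
            conv_lhs => rw [Matrix.eta_fin_two X.1]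
            ext i j
            fin_cases i <;> fin_cases j <;> simp <;> ring
          have hdet := X.2.2
          rw [hX] at hdet
          exact (det_iff _ _ _ _ hc.1 hc.2).mp hdet⟩,
        ⟨X.1 1 1 - X.1 0 0, ((comm_iff α β P X.1).mp X.2.1).1⟩,
        ⟨X.1 0 1 - β * X.1 1 0, ((comm_iff α β P X.1).mp X.2.1).2⟩⟩
      invFun := fun q =>
        ⟨!![q.1.1.1, β * q.1.1.2 + q.2.2.1; q.1.1.2, q.1.1.1 + q.2.1.1], by
          refine ⟨(comm_iff α β P _).mpr ⟨?_, ?_⟩, ?_⟩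
          · have hs := q.2.1.2
            simp only [Matrix.cons_val', Matrix.cons_val_zero, Matrix.cons_val_one,
              Matrix.head_cons, Matrix.head_fin_const, Matrix.empty_val',
              Matrix.cons_val_fin_one, Matrix.of_apply]
            linear_combination hs
          · have ht := q.2.2.2
            simp only [Matrix.cons_val', Matrix.cons_val_zero, Matrix.cons_val_one,
              Matrix.head_cons, Matrix.head_fin_const, Matrix.empty_val',
              Matrix.cons_val_fin_one, Matrix.of_apply]
            linear_combination ht
          · exact (det_iff _ _ _ _ q.2.1.2 q.2.2.2).mpr q.1.2⟩
      left_inv := fun X => by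
        apply Subtype.ext
        simp only
        conv_rhs => rw [Matrix.eta_fin_two X.1]
        ext i j
        fin_cases i <;> fin_cases j <;> simp <;> ring
      right_inv := fun q => by
        obtain ⟨⟨⟨a, c⟩, hv⟩, ⟨s, hs⟩, ⟨t, ht⟩⟩ := q
        refine Prod.ext (Subtype.ext ?_) (Prod.ext (Subtype.ext ?_) (Subtype.ext ?_)) <;>
          simp <;> ring }
  rw [Nat.card_congr (e1.trans e2), Nat.card_prod, Nat.card_prod,
    zmod_ann_card p n μ (le_of_lt hμn)]
  congr 1
  obtain ⟨δ, hδu, hδ⟩ := hβsq'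
  have hcongr : Nat.card {v : ZMod (p ^ n) × ZMod (p ^ n) //
        IsUnit ((π v.1) ^ 2 - π β * (π v.2) ^ 2)} =
      Nat.card {v : ZMod (p ^ n) × ZMod (p ^ n) //
        (fun w : ZMod p × ZMod p => IsUnit (w.1 ^ 2 - π β * w.2 ^ 2))
          ((fun v : ZMod (p ^ n) × ZMod (p ^ n) => (π v.1, π v.2)) v)} := rfl
  rw [hcongr, card_comap (fun v : ZMod (p ^ n) × ZMod (p ^ n) => (π v.1, π v.2))
    (p ^ (n - 1) * p ^ (n - 1))
    (fun b => by
      rw [Nat.card_congr (prodFiberEquiv (⇑π) (⇑π) b.1 b.2), Nat.card_prod,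
        zmod_fiber_card p n hn h, zmod_fiber_card p n hn h])
    (fun w => IsUnit (w.1 ^ 2 - π β * w.2 ^ 2))]
  congr 1
  have hiff : ∀ w : ZMod p × ZMod p, (IsUnit (w.1 ^ 2 - π β * w.2 ^ 2)) ↔
      (IsUnit (w.1 ^ 2 - δ ^ 2 * w.2 ^ 2)) := by
    intro w; rw [hδ]
  rw [Nat.card_congr (Equiv.subtypeEquivRight hiff)]
  exact field_pair_card p hp δ hδu

theorem conj_card {G : Type*} [Group G] [Fintype G] (g : G) :
    Nat.card {h : G // IsConj g h} * Nat.card (Subgroup.centralizer ({g} : Set G)) =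
      Nat.card G := by
  classical
  have e1 : {h : G // IsConj g h} ≃ MulAction.orbit (ConjAct G) g :=
    Equiv.subtypeEquivRight (fun h => by
      rw [ConjAct.mem_orbit_conjAct, isConj_comm])
  have e2 : Subgroup.centralizer ({g} : Set G) ≃ MulAction.stabilizer (ConjAct G) g :=
    { toFun := fun x => ⟨ConjAct.toConjAct x.1, by
        have hcomm : g * x.1 = x.1 * g := (Subgroup.mem_centralizer_iff.mp x.2) g rfl
        rw [MulAction.mem_stabilizer_iff, ConjAct.smul_def, ConjAct.ofConjAct_toConjAct,
          mul_inv_eq_iff_eq_mul]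
        exact hcomm.symm⟩
      invFun := fun y => ⟨ConjAct.ofConjAct y.1, by
        have hy := y.2
        rw [MulAction.mem_stabilizer_iff, ConjAct.smul_def, mul_inv_eq_iff_eq_mul] at hy
        exact Subgroup.mem_centralizer_iff.mpr (by
          intro j hj
          rw [Set.mem_singleton_iff] at hj
          subst hj
          exact hy.symm)⟩
      left_inv := fun x => by simp
      right_inv := fun y => by simp }
  rw [Nat.card_congr e1, Nat.card_congr e2, Nat.card_eq_fintype_card, Nat.card_eq_fintype_card,
    Nat.card_eq_fintype_card]
  rw [show Fintype.card G = Fintype.card (ConjAct G) from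
    Fintype.card_congr ConjAct.toConjAct.toEquiv]
  exact MulAction.card_orbit_mul_card_stabilizer_eq_card_group (ConjAct G) g

/-- For an odd prime `p`, `1 ≤ μ < n`, `α ∈ (ℤ/p^n)^×` and `β` a unit whose image in
`ℤ/p^{n-μ}` is the square of a unit, the centralizer in `GL₂(ℤ/p^n)` of
`!![α, βp^μ; p^μ, α]` has order `(p-1)²p^{2n-2+2μ}`, and hence its conjugacy class has
size `(p+1)p^{2(n-μ)-1}`. -/
theorem stmt_7 (p n μ : ℕ) [Fact p.Prime] (hp : p ≠ 2) (hn : 1 ≤ n) (hμ1 : 1 ≤ μ)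
    (hμn : μ < n) (α β : ZMod (p ^ n)) (hα : IsUnit α)
    (hβu : IsUnit (ZMod.castHom (pow_dvd_pow p (Nat.sub_le n μ)) (ZMod (p ^ (n - μ))) β))
    (hβsq : ∃ γ : ZMod (p ^ (n - μ)), IsUnit γ ∧
        ZMod.castHom (pow_dvd_pow p (Nat.sub_le n μ)) (ZMod (p ^ (n - μ))) β = γ ^ 2)
    (g : GL (Fin 2) (ZMod (p ^ n)))
    (hg : (g : Matrix (Fin 2) (Fin 2) (ZMod (p ^ n))) =
        !![α, β * (p : ZMod (p ^ n)) ^ μ; (p : ZMod (p ^ n)) ^ μ, α]) :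
    Nat.card (Subgroup.centralizer {g}) = (p - 1) ^ 2 * p ^ (2 * n - 2 + 2 * μ) ∧
    Nat.card {h : GL (Fin 2) (ZMod (p ^ n)) // IsConj g h} =
      (p + 1) * p ^ (2 * (n - μ) - 1) := by
  classical
  haveI : NeZero (p ^ n) := ⟨pow_ne_zero n (Fact.out : p.Prime).ne_zero⟩
  have hp2 : 2 ≤ p := (Fact.out : p.Prime).two_le
  have h : p ∣ p ^ n := dvd_pow_self p (by omega)
  have h2 : p ∣ p ^ (n - μ) := dvd_pow_self p (by omega)
  -- the square hypothesis mod p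
  have hβsq' : ∃ δ : ZMod p, IsUnit δ ∧ ZMod.castHom h (ZMod p) β = δ ^ 2 := by
    obtain ⟨γ, hγu, hγ⟩ := hβsq
    refine ⟨ZMod.castHom h2 (ZMod p) γ, hγu.map _, ?_⟩
    have hcomp : ZMod.castHom h (ZMod p) β =
        ZMod.castHom h2 (ZMod p)
          (ZMod.castHom (pow_dvd_pow p (Nat.sub_le n μ)) (ZMod (p ^ (n - μ))) β) := by
      rw [← RingHom.comp_apply, ZMod.castHom_comp]
    rw [hcomp, hγ, map_pow]
  have hcent := cent_card p n μ hp hn hμ1 hμn h α β hβsq' g hg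
  have harith1 : ((p ^ (n - 1) * p ^ (n - 1)) * (p - 1) ^ 2) * (p ^ μ * p ^ μ) =
      (p - 1) ^ 2 * p ^ (2 * n - 2 + 2 * μ) := by
    have hpow : p ^ (n - 1) * p ^ (n - 1) * (p ^ μ * p ^ μ) = p ^ (2 * n - 2 + 2 * μ) := by
      rw [← pow_add, ← pow_add, ← pow_add]
      congr 1
      omega
    calc ((p ^ (n - 1) * p ^ (n - 1)) * (p - 1) ^ 2) * (p ^ μ * p ^ μ)
        = (p - 1) ^ 2 * (p ^ (n - 1) * p ^ (n - 1) * (p ^ μ * p ^ μ)) := by ring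
      _ = (p - 1) ^ 2 * p ^ (2 * n - 2 + 2 * μ) := by rw [hpow]
  refine ⟨hcent.trans harith1, ?_⟩
  -- conjugacy class size
  have hoc := conj_card g
  rw [hcent, card_GL_zmod p n hn h] at hoc
  have hCpos : 0 < ((p ^ (n - 1) * p ^ (n - 1)) * (p - 1) ^ 2) * (p ^ μ * p ^ μ) := by
    have hp0 : 0 < p := by omega
    have hk : 0 < p - 1 := by omega
    exact Nat.mul_pos (Nat.mul_pos (Nat.mul_pos (pow_pos hp0 _) (pow_pos hp0 _)) (pow_pos hk 2))
      (Nat.mul_pos (pow_pos hp0 _) (pow_pos hp0 _))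
  have htarget : ((p + 1) * p ^ (2 * (n - μ) - 1)) *
      (((p ^ (n - 1) * p ^ (n - 1)) * (p - 1) ^ 2) * (p ^ μ * p ^ μ)) =
      (p ^ (n - 1)) ^ 4 * ((p ^ 2 - 1) * (p ^ 2 - p)) := by
    obtain ⟨k, rfl⟩ : ∃ k, p = k + 1 := ⟨p - 1, by omega⟩
    have e1 : (k + 1) ^ 2 - 1 = k * (k + 2) := by
      rw [Nat.sub_eq_iff_eq_add (by nlinarith)]; ring
    have e2 : (k + 1) ^ 2 - (k + 1) = (k + 1) * k := by
      rw [Nat.sub_eq_iff_eq_add (by nlinarith)]; ring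
    have e3 : k + 1 - 1 = k := by omega
    rw [e1, e2, e3]
    set a := 2 * (n - μ) - 1 with ha
    set b := n - 1 with hb
    have hexp : a + (b + b + (μ + μ)) = 4 * b + 1 := by omega
    calc ((k + 1 + 1) * (k + 1) ^ a) * (((k + 1) ^ b * (k + 1) ^ b) * k ^ 2 *
          ((k + 1) ^ μ * (k + 1) ^ μ))
        = k ^ 2 * (k + 2) * (k + 1) ^ (a + (b + b + (μ + μ))) := by ring
      _ = k ^ 2 * (k + 2) * (k + 1) ^ (4 * b + 1) := by rw [hexp]
      _ = ((k + 1) ^ b) ^ 4 * ((k * (k + 2)) * ((k + 1) * k)) := by ring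
  exact Nat.eq_of_mul_eq_mul_right hCpos (hoc.trans htarget.symm)
end

section
/- Let p be prime and suppose arithmetic functions ℓ⁰, ℓ¹ : ℕ → ℕ satisfy, for some k₀ coprime to p and integers 0 ≤ a ≤ n: ℓ⁰_k = e_{k₀}(k)·2·min{v(k)+a, n} and ℓ¹_k = e_{k₀}(k)·2·min{v(k)+a, n-1}, where e_{k₀}(k) = 1 if k₀ | k and 0 otherwise. Define λ_k = Σ_{d|k} μ(d)(p^{ℓ⁰_{k/d}} - p^{ℓ¹_{k/d}}). Then λ_k = p^{2n} - p^{2n-2} if k = k₀p^{n-a}, and λ_k = 0 otherwise. -/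
/-- Möbius-inversion computation of `λ_k` in the case `a = b`: with
`ℓ⁰_k = e_{k₀}(k)·2·min(v(k)+a, n)`, `ℓ¹_k = e_{k₀}(k)·2·min(v(k)+a, n-1)` and
`λ_k = Σ_{d∣k} μ(d)(p^{ℓ⁰_{k/d}} - p^{ℓ¹_{k/d}})`, one has `λ_k = p^{2n} - p^{2n-2}`
for `k = k₀p^{n-a}` and `λ_k = 0` otherwise. -/
theorem stmt_10 (p : ℕ) (hp : p.Prime) (k₀ n a : ℕ) (hk₀ : Nat.Coprime k₀ p)
    (hk₀pos : 0 < k₀) (hn : 1 ≤ n) (ha : a ≤ n)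
    (ℓ0 ℓ1 : ℕ → ℕ)
    (hℓ0 : ∀ k, ℓ0 k = if k₀ ∣ k then 2 * min (padicValNat p k + a) n else 0)
    (hℓ1 : ∀ k, ℓ1 k = if k₀ ∣ k then 2 * min (padicValNat p k + a) (n - 1) else 0)
    (lam : ℕ → ℤ)
    (hlam : ∀ k, lam k = ∑ d ∈ k.divisors,
        (ArithmeticFunction.moebius d : ℤ) *
          ((p : ℤ) ^ ℓ0 (k / d) - (p : ℤ) ^ ℓ1 (k / d))) :
    ∀ k : ℕ, 1 ≤ k →
      lam k = if k = k₀ * p ^ (n - a) then (p : ℤ) ^ (2 * n) - (p : ℤ) ^ (2 * n - 2)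
        else 0 := by
  haveI : Fact p.Prime := ⟨hp⟩
  set m := k₀ * p ^ (n - a) with hm
  set C : ℤ := (p : ℤ) ^ (2 * n) - (p : ℤ) ^ (2 * n - 2) with hC
  have hdvd : ∀ j : ℕ, j ≠ 0 → (m ∣ j ↔ (k₀ ∣ j ∧ n - a ≤ padicValNat p j)) := by
    intro j hj
    rw [← padicValNat_dvd_iff_le hj]
    constructor
    · intro h
      exact ⟨dvd_trans (dvd_mul_right _ _) h, dvd_trans (dvd_mul_left _ _) h⟩
    · rintro ⟨h1, h2⟩
      exact Nat.Coprime.mul_dvd_of_dvd_of_dvd (hk₀.pow_right _) h1 h2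
  have key : ∀ j > 0, ∑ i ∈ j.divisors, (if i = m then C else 0) =
      (p : ℤ) ^ ℓ0 j - (p : ℤ) ^ ℓ1 j := by
    intro j hj
    rw [Finset.sum_ite_eq' j.divisors m (fun _ => C)]
    simp only [Nat.mem_divisors]
    by_cases hmd : m ∣ j
    · rw [if_pos ⟨hmd, hj.ne'⟩]
      obtain ⟨h1, h2⟩ := (hdvd j hj.ne').mp hmd
      rw [hℓ0, hℓ1, if_pos h1, if_pos h1, min_eq_right (by omega),
        min_eq_right (by omega)]
      rw [hC]
      congr 2 <;> omega
    · rw [if_neg (by tauto)]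
      by_cases h1 : k₀ ∣ j
      · have h2 : ¬ (n - a ≤ padicValNat p j) :=
          fun h => hmd ((hdvd j hj.ne').mpr ⟨h1, h⟩)
        rw [hℓ0, hℓ1, if_pos h1, if_pos h1, min_eq_left (by omega),
          min_eq_left (by omega), sub_self]
      · rw [hℓ0, hℓ1, if_neg h1, if_neg h1, sub_self]
  have inv := ArithmeticFunction.sum_eq_iff_sum_smul_moebius_eq.mp key
  intro k hk
  have h2 := inv k hk
  rw [hlam k, ← Nat.sum_divisorsAntidiagonal
    (fun d e => (ArithmeticFunction.moebius d : ℤ) * ((p : ℤ) ^ ℓ0 e - (p : ℤ) ^ ℓ1 e))]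
  simpa [zsmul_eq_mul] using h2
end

section
/- Let p be prime, k₀ coprime to p, and 0 ≤ a < b ≤ n. Define λ̃_k = p^{ℓ⁰_k} - p^{ℓ¹_k} where ℓ⁰_k = e_{k₀}(k)(min{v(k)+a,n} + min{v(k)+b,n}) and ℓ¹_k = e_{k₀}(k)(min{v(k)+a,n-1} + min{v(k)+b,n-1}). Let λ_k = Σ_{d|k} μ(d)λ̃_{k/d}. Then λ_k = (p-1)p^{2n+a-b-1} if k = k₀p^{n-b}; λ_k = (p-1)²p^{n+u+a-2} if k = k₀p^u with n-b < u < n-a; λ_k = (p-1)p^{2n-1} if k = k₀p^{n-a}; and λ_k = 0 for all other k. -/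
open Finset

namespace Stmt11

lemma pow_step (p : ℕ) (e : ℕ) :
    (p:ℤ) ^ (e+1) - (p:ℤ) ^ e = ((p:ℤ) - 1) * (p:ℤ) ^ e := by
  rw [pow_succ]; ring

def f0 (n a b v : ℕ) : ℕ := min (v + a) n + min (v + b) n
def f1 (n a b v : ℕ) : ℕ := min (v + a) (n-1) + min (v + b) (n-1)

lemma telescope2 (p E : ℕ) :
    ((p:ℤ)-1) * (p:ℤ)^E + ((p:ℤ)-1) * (p:ℤ)^(E+1) = (p:ℤ)^(E+1+1) - (p:ℤ)^E := by
  rw [pow_succ, pow_succ]; ring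

lemma telescope3 (p E : ℕ) :
    ((p:ℤ)-1) * (p:ℤ)^E + ((p:ℤ)-1)^2 * (p:ℤ)^E = (p:ℤ)^(E+1+1) - (p:ℤ)^(E+1) := by
  rw [pow_succ, pow_succ]; ring

def V (p n a b u : ℕ) : ℤ :=
  if u ≤ n - b then ((p:ℤ) - 1) * (p:ℤ) ^ (2*n + a - b - 1)
  else if u < n - a then ((p:ℤ) - 1)^2 * (p:ℤ) ^ (n + u + a - 2)
  else ((p:ℤ) - 1) * (p:ℤ) ^ (2*n - 1)

lemma sum_V (p n a b : ℕ) (hn : 1 ≤ n) (hab : a < b) (hb : b ≤ n) (v : ℕ) :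
    ∑ u ∈ Finset.Icc (n-b) (min v (n-a)), V p n a b u
      = (p:ℤ) ^ f0 n a b v - (p:ℤ) ^ f1 n a b v := by
  induction v with
  | zero =>
      rcases Nat.eq_zero_or_pos (n - b) with h0 | h0
      · -- b = n, interval is {0}
        have hm : min 0 (n - a) = 0 := by omega
        rw [hm, h0, Finset.Icc_self, Finset.sum_singleton]
        have hf0 : f0 n a b 0 = (2*n + a - b - 1) + 1 := by simp [f0]; omega
        have hf1 : f1 n a b 0 = 2*n + a - b - 1 := by simp [f1]; omega
        rw [hf0, hf1, pow_step, V, if_pos (by omega)]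
      · have hm : min 0 (n - a) = 0 := by omega
        rw [hm, Finset.Icc_eq_empty (by omega), Finset.sum_empty]
        have : f0 n a b 0 = f1 n a b 0 := by simp [f0, f1]; omega
        rw [this]; ring
  | succ v ih =>
      rcases lt_or_ge (v + 1) (n - b) with hlt | hge
      · -- interval still empty
        have hm : min (v+1) (n - a) = v + 1 := by omega
        rw [hm, Finset.Icc_eq_empty (by omega), Finset.sum_empty]
        have : f0 n a b (v+1) = f1 n a b (v+1) := by simp [f0, f1]; omega
        rw [this]; ring
      · rcases le_or_gt (v + 1) (n - a) with hle | hgt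
        · -- append the top element
          have hm1 : min (v+1) (n - a) = v + 1 := by omega
          have hm0 : min v (n - a) = v := by omega
          rw [hm0] at ih
          rw [hm1, Finset.sum_Icc_succ_top hge, ih]
          rcases eq_or_lt_of_le hge with heq | hlt'
          · -- v + 1 = n - b : previous W is zero
            have h0 : f0 n a b v = f1 n a b v := by simp [f0, f1]; omega
            have hV : V p n a b (v+1) = ((p:ℤ)-1) * (p:ℤ)^(2*n + a - b - 1) := by
              rw [V, if_pos (by omega)]
            have hf0 : f0 n a b (v+1) = (2*n + a - b - 1) + 1 := by simp [f0]; omega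
            have hf1 : f1 n a b (v+1) = 2*n + a - b - 1 := by simp [f1]; omega
            rw [h0, hV, hf0, hf1, pow_step]; ring
          · rcases eq_or_lt_of_le hle with heq2 | hlt2
            · -- v + 1 = n - a : top case
              have hf0v : f0 n a b v = (2*n - 1 - 1) + 1 := by simp [f0]; omega
              have hf1v : f1 n a b v = 2*n - 1 - 1 := by simp [f1]; omega
              have hf0 : f0 n a b (v+1) = (2*n - 1 - 1) + 1 + 1 := by simp [f0]; omega
              have hf1 : f1 n a b (v+1) = 2*n - 1 - 1 := by simp [f1]; omega
              have hV : V p n a b (v+1) = ((p:ℤ)-1) * (p:ℤ)^(2*n - 1) := by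
                rw [V, if_neg (by omega), if_neg (by omega)]
              rw [show 2*n - 1 = (2*n - 1 - 1) + 1 from by omega] at hV
              rw [hf0v, hf1v, hf0, hf1, hV, pow_step, telescope2]
            · -- middle case  n - b < v+1 < n - a
              have hf0v : f0 n a b v = (n + v + a - 1) + 1 := by simp [f0]; omega
              have hf1v : f1 n a b v = n + v + a - 1 := by simp [f1]; omega
              have hf0 : f0 n a b (v+1) = (n + v + a - 1) + 1 + 1 := by simp [f0]; omega
              have hf1 : f1 n a b (v+1) = (n + v + a - 1) + 1 := by simp [f1]; omega
              have hV : V p n a b (v+1)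
                  = ((p:ℤ)-1)^2 * (p:ℤ)^(n + (v+1) + a - 2) := by
                rw [V, if_neg (by omega), if_pos (by omega)]
              rw [show n + (v+1) + a - 2 = n + v + a - 1 from by omega] at hV
              rw [hf0v, hf1v, hf0, hf1, hV, pow_step, telescope3]
        · -- v + 1 > n - a : nothing changes
          have hm1 : min (v+1) (n - a) = n - a := by omega
          have hm0 : min v (n - a) = n - a := by omega
          rw [hm1, ← hm0, ih]
          have h0 : f0 n a b (v+1) = f0 n a b v := by simp [f0]; omega
          have h1 : f1 n a b (v+1) = f1 n a b v := by simp [f1]; omega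
          rw [h0, h1]

lemma val_aux (p k₀ : ℕ) (hp : p.Prime) (hk₀ : Nat.Coprime k₀ p) (hk₀pos : 0 < k₀) (u : ℕ) :
    padicValNat p (k₀ * p ^ u) = u := by
  haveI := Fact.mk hp
  have hnd : ¬ p ∣ k₀ := (Nat.Prime.coprime_iff_not_dvd hp).mp (Nat.coprime_comm.mp hk₀)
  rw [padicValNat.mul hk₀pos.ne' (pow_ne_zero u hp.pos.ne'),
    padicValNat.eq_zero_of_not_dvd hnd, padicValNat.prime_pow, zero_add]

lemma sum_c (p k₀ n a b : ℕ) (hp : p.Prime) (hk₀ : Nat.Coprime k₀ p) (hk₀pos : 0 < k₀)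
    (hn : 1 ≤ n) (hab : a < b) (hb : b ≤ n) (k : ℕ) (hk : 0 < k) :
    ∑ d ∈ k.divisors, (if ∃ u ∈ Finset.Icc (n-b) (n-a), d = k₀ * p ^ u
        then V p n a b (padicValNat p d) else 0)
      = (p:ℤ) ^ (if k₀ ∣ k then f0 n a b (padicValNat p k) else 0)
        - (p:ℤ) ^ (if k₀ ∣ k then f1 n a b (padicValNat p k) else 0) := by
  haveI := Fact.mk hp
  by_cases hd : k₀ ∣ k
  · rw [if_pos hd, if_pos hd, ← Finset.sum_filter]
    have hset : k.divisors.filter (fun d => ∃ u ∈ Finset.Icc (n-b) (n-a), d = k₀ * p ^ u)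
        = (Finset.Icc (n-b) (min (padicValNat p k) (n-a))).image (fun u => k₀ * p ^ u) := by
      ext d
      simp only [Finset.mem_filter, Nat.mem_divisors, Finset.mem_image, Finset.mem_Icc]
      constructor
      · rintro ⟨⟨hdk, -⟩, u, ⟨hu1, hu2⟩, rfl⟩
        refine ⟨u, ⟨hu1, le_min ?_ hu2⟩, rfl⟩
        exact (padicValNat_dvd_iff_le hk.ne').mp ((dvd_mul_left _ _).trans hdk)
      · rintro ⟨u, ⟨hu1, hu2⟩, rfl⟩
        refine ⟨⟨?_, hk.ne'⟩, u, ⟨hu1, (le_min_iff.mp hu2).2⟩, rfl⟩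
        exact Nat.Coprime.mul_dvd_of_dvd_of_dvd (hk₀.pow_right u) hd
          ((padicValNat_dvd_iff_le hk.ne').mpr (le_min_iff.mp hu2).1)
    rw [hset, Finset.sum_image (fun u _ w _ h =>
      Nat.pow_right_injective hp.two_le (Nat.eq_of_mul_eq_mul_left hk₀pos h))]
    rw [Finset.sum_congr rfl (fun u _ => by rw [val_aux p k₀ hp hk₀ hk₀pos u])]
    exact sum_V p n a b hn hab hb _
  · rw [if_neg hd, if_neg hd, sub_self, Finset.sum_eq_zero]
    intro d hdd
    rw [if_neg]
    rintro ⟨u, -, rfl⟩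
    exact hd ((dvd_mul_right _ _).trans (Nat.mem_divisors.mp hdd).1)

end Stmt11

/-- Möbius-inversion computation of `λ_k` in the case `a < b`: with
`ℓ⁰_k = e_{k₀}(k)(min(v(k)+a,n) + min(v(k)+b,n))`,
`ℓ¹_k = e_{k₀}(k)(min(v(k)+a,n-1) + min(v(k)+b,n-1))`,
`λ̃_k = p^{ℓ⁰_k} - p^{ℓ¹_k}` and `λ_k = Σ_{d∣k} μ(d)λ̃_{k/d}`, one has
`λ_{k₀p^{n-b}} = (p-1)p^{2n+a-b-1}`, `λ_{k₀p^u} = (p-1)²p^{n+u+a-2}` for `n-b < u < n-a`,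
`λ_{k₀p^{n-a}} = (p-1)p^{2n-1}`, and `λ_k = 0` for all other `k`. -/
theorem stmt_11 (p : ℕ) (hp : p.Prime) (k₀ n a b : ℕ) (hk₀ : Nat.Coprime k₀ p)
    (hk₀pos : 0 < k₀) (hn : 1 ≤ n) (hab : a < b) (hb : b ≤ n)
    (ℓ0 ℓ1 : ℕ → ℕ)
    (hℓ0 : ∀ k, ℓ0 k = if k₀ ∣ k then
        min (padicValNat p k + a) n + min (padicValNat p k + b) n else 0)
    (hℓ1 : ∀ k, ℓ1 k = if k₀ ∣ k then
        min (padicValNat p k + a) (n - 1) + min (padicValNat p k + b) (n - 1) else 0)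
    (lam : ℕ → ℤ)
    (hlam : ∀ k, lam k = ∑ d ∈ k.divisors,
        (ArithmeticFunction.moebius d : ℤ) *
          ((p : ℤ) ^ ℓ0 (k / d) - (p : ℤ) ^ ℓ1 (k / d))) :
    lam (k₀ * p ^ (n - b)) = ((p : ℤ) - 1) * (p : ℤ) ^ (2 * n + a - b - 1) ∧
    (∀ u : ℕ, n - b < u → u < n - a →
        lam (k₀ * p ^ u) = ((p : ℤ) - 1) ^ 2 * (p : ℤ) ^ (n + u + a - 2)) ∧
    lam (k₀ * p ^ (n - a)) = ((p : ℤ) - 1) * (p : ℤ) ^ (2 * n - 1) ∧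
    (∀ k : ℕ, 1 ≤ k → (¬ ∃ u : ℕ, n - b ≤ u ∧ u ≤ n - a ∧ k = k₀ * p ^ u) →
        lam k = 0) := by
  haveI := Fact.mk hp
  have hval := Stmt11.val_aux p k₀ hp hk₀ hk₀pos
  have hpos : ∀ u : ℕ, 0 < k₀ * p ^ u := fun u => Nat.mul_pos hk₀pos (pow_pos hp.pos u)
  have hc : ∀ k, 0 < k → lam k
      = (if ∃ u ∈ Finset.Icc (n-b) (n-a), k = k₀ * p ^ u
          then Stmt11.V p n a b (padicValNat p k) else 0) := by
    have key := (ArithmeticFunction.sum_eq_iff_sum_mul_moebius_eq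
      (f := fun d => if ∃ u ∈ Finset.Icc (n-b) (n-a), d = k₀ * p ^ u
          then Stmt11.V p n a b (padicValNat p d) else 0)
      (g := fun k => (p:ℤ) ^ ℓ0 k - (p:ℤ) ^ ℓ1 k)).mp ?_
    · intro k hk
      rw [hlam k, ← Nat.sum_divisorsAntidiagonal
        (fun d e => (ArithmeticFunction.moebius d : ℤ) * ((p:ℤ) ^ ℓ0 e - (p:ℤ) ^ ℓ1 e))]
      exact key k hk
    · intro k hk
      have := Stmt11.sum_c p k₀ n a b hp hk₀ hk₀pos hn hab hb k hk
      rw [hℓ0 k, hℓ1 k]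
      simpa [Stmt11.f0, Stmt11.f1] using this
  have hba : n - b < n - a := by omega
  refine ⟨?_, ?_, ?_, ?_⟩
  · rw [hc _ (hpos _), if_pos ⟨n-b, Finset.mem_Icc.mpr ⟨le_rfl, hba.le⟩, rfl⟩, hval,
      Stmt11.V, if_pos le_rfl]
  · intro u h1 h2
    rw [hc _ (hpos _), if_pos ⟨u, Finset.mem_Icc.mpr ⟨h1.le, h2.le⟩, rfl⟩, hval,
      Stmt11.V, if_neg (by omega), if_pos h2]
  · rw [hc _ (hpos _), if_pos ⟨n-a, Finset.mem_Icc.mpr ⟨hba.le, le_rfl⟩, rfl⟩, hval,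
      Stmt11.V, if_neg (by omega), if_neg (by omega)]
  · intro k hk hnot
    rw [hc k hk, if_neg]
    rintro ⟨u, hu, rfl⟩
    exact hnot ⟨u, (Finset.mem_Icc.mp hu).1, (Finset.mem_Icc.mp hu).2, rfl⟩
end

section
/- Let p be a prime, α ∈ ℤ_p^× and μ ≥ 0, and let g be the 2×2 matrix over ℤ_p[x] with rows (α, x) and (p^μ, α). Then for all k ≥ 1, g^k has the form with rows (r_k, x·s_k) and (p^μ·s_k, r_k), where r_k(x) = Σ_{i≥0} C(k,2i) α^{k-2i} p^{μi} x^i and s_k(x) = Σ_{i≥0} C(k,2i+1) α^{k-2i-1} p^{μi} x^i. -/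
open Polynomial

section Aux

variable {R : Type*} [CommRing R]

/-- coefficient of `x^i` in `r_k` -/
def fk (a b : R) (k i : ℕ) : R := (k.choose (2*i) : R) * a ^ (k - 2*i) * b ^ i

/-- coefficient of `x^i` in `s_k` -/
def gk (a b : R) (k i : ℕ) : R := (k.choose (2*i+1) : R) * a ^ (k - (2*i+1)) * b ^ i

noncomputable def rr (a b : R) (k : ℕ) : Polynomial R :=
  ∑ i ∈ Finset.range (k+1), C (fk a b k i) * X ^ i

noncomputable def ss (a b : R) (k : ℕ) : Polynomial R :=
  ∑ i ∈ Finset.range (k+1), C (gk a b k i) * X ^ i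

variable (a b : R)

lemma aux1 (k i : ℕ) : a * fk a b k (i+1) + b * gk a b k i = fk a b (k+1) (i+1) := by
  simp only [fk, gk]
  have hp : (k+1).choose (2*(i+1)) = k.choose (2*i+1) + k.choose (2*i+1+1) := by
    rw [show 2*(i+1) = (2*i+1)+1 by ring]; exact Nat.choose_succ_succ k (2*i+1)
  rcases le_or_gt (2*(i+1)) k with h | h
  · rw [hp, show k - (2*i+1) = (k - 2*(i+1)) + 1 by omega,
      show k + 1 - 2*(i+1) = (k - 2*(i+1)) + 1 by omega,
      show (2*i+1)+1 = 2*(i+1) by ring]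
    push_cast; ring
  · have h1 : k.choose (2*(i+1)) = 0 := Nat.choose_eq_zero_of_lt h
    rw [hp, h1, show (2*i+1)+1 = 2*(i+1) by ring, h1,
      show k + 1 - 2*(i+1) = k - (2*i+1) by omega]
    push_cast; ring

lemma aux2 (k i : ℕ) : fk a b k i + a * gk a b k i = gk a b (k+1) i := by
  simp only [fk, gk]
  have hp : (k+1).choose (2*i+1) = k.choose (2*i) + k.choose (2*i+1) :=
    Nat.choose_succ_succ k (2*i)
  rcases le_or_gt (2*i+1) k with h | h
  · rw [hp, show k - 2*i = (k - (2*i+1)) + 1 by omega,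
      show k + 1 - (2*i+1) = (k - (2*i+1)) + 1 by omega]
    push_cast; ring
  · have h1 : k.choose (2*i+1) = 0 := Nat.choose_eq_zero_of_lt h
    rw [hp, h1, show k + 1 - (2*i+1) = k - 2*i by omega]
    push_cast; ring

lemma fk_zero (k : ℕ) : a * fk a b k 0 = fk a b (k+1) 0 := by
  simp [fk, pow_succ]; ring

lemma fk_top (k : ℕ) : fk a b k (k+1) = (0 : R) := by
  simp [fk, Nat.choose_eq_zero_of_lt (by omega : k < 2*(k+1))]

lemma hB (k : ℕ) : rr a b k + C a * ss a b k = ss a b (k+1) := by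
  simp only [rr, ss, Finset.mul_sum]
  rw [Finset.sum_range_succ (fun i => C (gk a b (k+1) i) * X ^ i) (k+1)]
  have htop : gk a b (k+1) (k+1) = 0 := by
    simp [gk, Nat.choose_eq_zero_of_lt (by omega : k + 1 < 2*(k+1)+1)]
  rw [htop]
  simp only [map_zero, zero_mul, add_zero]
  rw [← Finset.sum_add_distrib]
  refine Finset.sum_congr rfl fun i _ => ?_
  rw [← aux2 a b k i, map_add, map_mul]; ring

lemma hA (k : ℕ) : C a * rr a b k + C b * (X * ss a b k) = rr a b (k+1) := by
  simp only [rr, ss, Finset.mul_sum]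
  rw [Finset.sum_range_succ' (fun i => C (fk a b (k+1) i) * X ^ i) (k+1)]
  have hrk : (∑ i ∈ Finset.range (k+1), C a * (C (fk a b k i) * X ^ i))
      = ∑ i ∈ Finset.range (k+2), C a * (C (fk a b k i) * X ^ i) := by
    rw [Finset.sum_range_succ (fun i => C a * (C (fk a b k i) * X ^ i)) (k+1),
      fk_top]
    simp
  rw [hrk, Finset.sum_range_succ' (fun i => C a * (C (fk a b k i) * X ^ i)) (k+1)]
  rw [add_right_comm, ← Finset.sum_add_distrib]
  congr 1
  · refine Finset.sum_congr rfl fun i _ => ?_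
    rw [← aux1 a b k i, map_add, map_mul, map_mul]; ring
  · rw [pow_zero, mul_one, mul_one, ← map_mul, fk_zero]

lemma key : ∀ k : ℕ, 1 ≤ k →
    (!![C a, X; C b, C a] : Matrix (Fin 2) (Fin 2) (Polynomial R)) ^ k =
      !![rr a b k, X * ss a b k; C b * ss a b k, rr a b k] := by
  intro k hk
  induction k with
  | zero => omega
  | succ n ih =>
    rcases Nat.eq_or_lt_of_le hk with h | h
    · -- n + 1 = 1
      have hn : n = 0 := by omega
      subst hn
      have h1 : rr a b 1 = C a := by
        simp [rr, fk, Finset.sum_range_succ]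
      have h2 : ss a b 1 = 1 := by
        simp [ss, gk, Finset.sum_range_succ, Nat.choose]
      rw [pow_one, h1, h2]
      ext i j
      fin_cases i <;> fin_cases j <;> simp
    · have hn : 1 ≤ n := by omega
      rw [pow_succ, ih hn, Matrix.mul_fin_two]
      refine Matrix.ext fun i j => ?_
      fin_cases i <;> fin_cases j <;>
        simp
      · linear_combination (hA a b n)
      · linear_combination X * (hB a b n)
      · linear_combination C b * (hB a b n)
      · linear_combination (hA a b n)

end Aux

/-- For `g = !![α, x; p^μ, α]` over `ℤ_p[x]`, for all `k ≥ 1` one has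
`g^k = !![r_k, x·s_k; p^μ·s_k, r_k]` where
`r_k(x) = Σᵢ C(k,2i) α^{k-2i} p^{μi} x^i` and `s_k(x) = Σᵢ C(k,2i+1) α^{k-2i-1} p^{μi} x^i`. -/
theorem stmt_12 (p : ℕ) [Fact p.Prime] (α : ℤ_[p]) (hα : IsUnit α) (μ : ℕ) :
    ∀ k : ℕ, 1 ≤ k →
      (!![C α, X; C ((p : ℤ_[p]) ^ μ), C α] :
          Matrix (Fin 2) (Fin 2) (Polynomial ℤ_[p])) ^ k =
        !![∑ i ∈ Finset.range (k + 1),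
              C ((k.choose (2 * i) : ℤ_[p]) * α ^ (k - 2 * i) * (p : ℤ_[p]) ^ (μ * i)) * X ^ i,
            X * ∑ i ∈ Finset.range (k + 1),
              C ((k.choose (2 * i + 1) : ℤ_[p]) * α ^ (k - (2 * i + 1)) *
                (p : ℤ_[p]) ^ (μ * i)) * X ^ i;
            C ((p : ℤ_[p]) ^ μ) * ∑ i ∈ Finset.range (k + 1),
              C ((k.choose (2 * i + 1) : ℤ_[p]) * α ^ (k - (2 * i + 1)) *
                (p : ℤ_[p]) ^ (μ * i)) * X ^ i,
            ∑ i ∈ Finset.range (k + 1),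
              C ((k.choose (2 * i) : ℤ_[p]) * α ^ (k - 2 * i) * (p : ℤ_[p]) ^ (μ * i)) * X ^ i] := by
  intro k hk
  simpa [rr, ss, fk, gk, pow_mul] using key α ((p : ℤ_[p]) ^ μ) k hk
end

section
/- Let p be an odd prime, α ∈ ℤ_p^×, μ ≥ 0, and define t_k(x) = (r_k(x)-1)² - x p^μ s_k(x)², where r_k, s_k are the entries of the k-th power of the matrix with rows (α,x),(p^μ,α) (i.e., t_k = det(g^k - 1)). If the order o_ᾱ of α mod p does not divide k, then all roots of t_k in an algebraic closure of ℚ_p have valuation -μ. -/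
open Polynomial

/-- `r_k(x) = Σᵢ C(k,2i) α^{k-2i} p^{μi} x^i`. -/
noncomputable def rPoly (p : ℕ) [Fact p.Prime] (α : ℤ_[p]) (μ k : ℕ) : Polynomial ℤ_[p] :=
  ∑ i ∈ Finset.range (k + 1),
    C ((k.choose (2 * i) : ℤ_[p]) * α ^ (k - 2 * i) * (p : ℤ_[p]) ^ (μ * i)) * X ^ i

/-- `s_k(x) = Σᵢ C(k,2i+1) α^{k-2i-1} p^{μi} x^i`. -/
noncomputable def sPoly (p : ℕ) [Fact p.Prime] (α : ℤ_[p]) (μ k : ℕ) : Polynomial ℤ_[p] :=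
  ∑ i ∈ Finset.range (k + 1),
    C ((k.choose (2 * i + 1) : ℤ_[p]) * α ^ (k - (2 * i + 1)) * (p : ℤ_[p]) ^ (μ * i)) * X ^ i

/-- `t_k(x) = det(g^k - 1) = (r_k(x) - 1)² - x p^μ s_k(x)²`. -/
noncomputable def tPoly (p : ℕ) [Fact p.Prime] (α : ℤ_[p]) (μ k : ℕ) : Polynomial ℤ_[p] :=
  (rPoly p α μ k - 1) ^ 2 - X * C ((p : ℤ_[p]) ^ μ) * (sPoly p α μ k) ^ 2

section aux

variable (p : ℕ) [Fact p.Prime] (α : ℤ_[p]) (μ k : ℕ)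

theorem coeff_rPoly (n : ℕ) : (rPoly p α μ k).coeff n
    = (k.choose (2 * n) : ℤ_[p]) * α ^ (k - 2 * n) * (p : ℤ_[p]) ^ (μ * n) := by
  rw [rPoly, finset_sum_coeff]
  simp only [coeff_C_mul, coeff_X_pow, mul_ite, mul_one, mul_zero]
  rw [Finset.sum_ite_eq (Finset.range (k+1)) n]
  split
  · rfl
  · next h =>
    rw [Finset.mem_range, not_lt] at h
    rw [Nat.choose_eq_zero_of_lt (by omega)]
    simp

theorem coeff_sPoly (n : ℕ) : (sPoly p α μ k).coeff n
    = (k.choose (2 * n + 1) : ℤ_[p]) * α ^ (k - (2 * n + 1)) * (p : ℤ_[p]) ^ (μ * n) := by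
  rw [sPoly, finset_sum_coeff]
  simp only [coeff_C_mul, coeff_X_pow, mul_ite, mul_one, mul_zero]
  rw [Finset.sum_ite_eq (Finset.range (k+1)) n]
  split
  · rfl
  · next h =>
    rw [Finset.mem_range, not_lt] at h
    rw [Nat.choose_eq_zero_of_lt (by omega)]
    simp

theorem natDegree_rPoly : (rPoly p α μ k).natDegree ≤ k / 2 := by
  rw [natDegree_le_iff_coeff_eq_zero]
  intro N hN
  rw [coeff_rPoly, Nat.choose_eq_zero_of_lt (by omega)]
  simp

theorem natDegree_sPoly : (sPoly p α μ k).natDegree ≤ (k - 1) / 2 := by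
  rw [natDegree_le_iff_coeff_eq_zero]
  intro N hN
  rw [coeff_sPoly, Nat.choose_eq_zero_of_lt (by omega)]
  simp

theorem natDegree_tPoly (hk : 1 ≤ k) : (tPoly p α μ k).natDegree ≤ k := by
  rw [tPoly]
  refine le_trans (natDegree_sub_le _ _) (max_le ?_ ?_)
  · refine le_trans (natDegree_pow_le) ?_
    have h1 : (rPoly p α μ k - 1).natDegree ≤ k / 2 :=
      le_trans (natDegree_sub_le _ _) (by simpa using natDegree_rPoly p α μ k)
    omega
  · refine le_trans (natDegree_mul_le) ?_
    have h2 : ((sPoly p α μ k) ^ 2).natDegree ≤ 2 * ((k-1)/2) :=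
      le_trans (natDegree_pow_le) (by have := natDegree_sPoly p α μ k; omega)
    have h3 : (X * C ((p : ℤ_[p]) ^ μ)).natDegree ≤ 1 :=
      le_trans (natDegree_mul_le) (by simp)
    omega

/-- divisibility of coefficients by `p^{μ i}`. -/
def DvdCoeff (P : Polynomial ℤ_[p]) : Prop := ∀ i : ℕ, (p : ℤ_[p]) ^ (μ * i) ∣ P.coeff i

theorem dvdCoeff_rPoly : DvdCoeff p μ (rPoly p α μ k) := fun i => by
  rw [coeff_rPoly]; exact Dvd.intro_left _ rfl

theorem dvdCoeff_sPoly : DvdCoeff p μ (sPoly p α μ k) := fun i => by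
  rw [coeff_sPoly]; exact Dvd.intro_left _ rfl

theorem dvdCoeff_mul {P Q : Polynomial ℤ_[p]} (hP : DvdCoeff p μ P) (hQ : DvdCoeff p μ Q) :
    DvdCoeff p μ (P * Q) := by
  intro i
  rw [coeff_mul]
  refine Finset.dvd_sum fun x hx => ?_
  rw [Finset.HasAntidiagonal.mem_antidiagonal] at hx
  rw [← hx, Nat.mul_add, pow_add]
  exact mul_dvd_mul (hP _) (hQ _)

theorem dvdCoeff_sub {P Q : Polynomial ℤ_[p]} (hP : DvdCoeff p μ P) (hQ : DvdCoeff p μ Q) :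
    DvdCoeff p μ (P - Q) := fun i => by
  rw [coeff_sub]; exact dvd_sub (hP i) (hQ i)

theorem dvdCoeff_one : DvdCoeff p μ (1 : Polynomial ℤ_[p]) := fun i => by
  rcases Nat.eq_zero_or_pos i with h | h
  · simp [h]
  · rw [coeff_one, if_neg (by omega)]; exact dvd_zero _

theorem dvdCoeff_tPoly : DvdCoeff p μ (tPoly p α μ k) := by
  have hr1 : DvdCoeff p μ (rPoly p α μ k - 1) :=
    dvdCoeff_sub p μ (dvdCoeff_rPoly p α μ k) (dvdCoeff_one p μ)
  have hs := dvdCoeff_sPoly p α μ k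
  have hXs : DvdCoeff p μ (X * C ((p : ℤ_[p]) ^ μ) * (sPoly p α μ k) ^ 2) := by
    intro i
    have : (X : Polynomial ℤ_[p]) * C ((p : ℤ_[p]) ^ μ) * (sPoly p α μ k) ^ 2
        = C ((p : ℤ_[p]) ^ μ) * (X * (sPoly p α μ k * sPoly p α μ k)) := by ring
    rw [this, coeff_C_mul]
    rcases Nat.eq_zero_or_pos i with h | h
    · subst h
      simp [mul_coeff_zero]
    · obtain ⟨j, rfl⟩ : ∃ j, i = j + 1 := ⟨i - 1, by omega⟩
      rw [coeff_X_mul]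
      have := dvdCoeff_mul p μ hs hs j
      rw [show μ * (j+1) = μ + μ * j by ring, pow_add]
      exact mul_dvd_mul dvd_rfl this
  rw [tPoly, sq (rPoly p α μ k - 1)]
  exact dvdCoeff_sub p μ (dvdCoeff_mul p μ hr1 hr1) hXs

theorem coeff_tPoly_zero : (tPoly p α μ k).coeff 0 = (α ^ k - 1) ^ 2 := by
  rw [coeff_zero_eq_eval_zero, tPoly]
  have hr : (rPoly p α μ k).eval 0 = α ^ k := by
    rw [← coeff_zero_eq_eval_zero, coeff_rPoly]
    simp
  simp [eval_pow, eval_sub, eval_mul, hr]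

theorem coeff_tPoly_top (hk : 1 ≤ k) :
    (tPoly p α μ k).coeff k = (if Even k then 1 else -1) * (p : ℤ_[p]) ^ (μ * k) := by
  have hrr : ((rPoly p α μ k) * (rPoly p α μ k)).coeff k
      = if Even k then (p : ℤ_[p]) ^ (μ * k) else 0 := by
    rw [coeff_mul]
    have hterm : ∀ x ∈ Finset.HasAntidiagonal.antidiagonal k,
        (rPoly p α μ k).coeff x.1 * (rPoly p α μ k).coeff x.2
        = if 2 * x.1 = k then (p : ℤ_[p]) ^ (μ * k) else 0 := by
      rintro ⟨a, b⟩ hx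
      rw [Finset.HasAntidiagonal.mem_antidiagonal] at hx
      simp only at hx ⊢
      rw [coeff_rPoly, coeff_rPoly]
      by_cases h : 2 * a = k
      · rw [if_pos h]
        have hb : 2 * b = k := by omega
        rw [h, hb, Nat.choose_self, Nat.sub_self, pow_zero]
        simp only [Nat.cast_one, one_mul, mul_one]
        rw [← pow_add, ← Nat.mul_add, hx]
      · rw [if_neg h]
        rcases Nat.lt_or_ge (2 * a) k with h' | h'
        · rw [Nat.choose_eq_zero_of_lt (show k < 2 * b by omega)]
          ring
        · rw [Nat.choose_eq_zero_of_lt (by omega)]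
          ring
    rw [Finset.sum_congr rfl hterm]
    rcases Nat.even_or_odd k with he | ho
    · obtain ⟨m, rfl⟩ := he
      rw [if_pos ⟨m, rfl⟩]
      rw [Finset.sum_eq_single_of_mem (m, m) (by rw [Finset.HasAntidiagonal.mem_antidiagonal])]
      · rw [if_pos (by omega)]
      · rintro ⟨a, b⟩ hab hne
        rw [Finset.HasAntidiagonal.mem_antidiagonal] at hab
        rw [if_neg]
        intro h
        exfalso
        apply hne
        simp only at hab h
        have ha : a = m := by omega
        have hb : b = m := by omega
        rw [ha, hb]
    · rw [if_neg (Nat.not_even_iff_odd.mpr ho)]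
      refine Finset.sum_eq_zero fun x hx => ?_
      rw [if_neg]
      intro h
      exact (Nat.not_even_iff_odd.mpr ho) ⟨x.1, by omega⟩
  have hss : ((sPoly p α μ k) * (sPoly p α μ k)).coeff (k - 1)
      = if Even k then 0 else (p : ℤ_[p]) ^ (μ * (k - 1)) := by
    rw [coeff_mul]
    have hterm : ∀ x ∈ Finset.HasAntidiagonal.antidiagonal (k - 1),
        (sPoly p α μ k).coeff x.1 * (sPoly p α μ k).coeff x.2
        = if 2 * x.1 + 1 = k then (p : ℤ_[p]) ^ (μ * (k - 1)) else 0 := by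
      rintro ⟨a, b⟩ hx
      rw [Finset.HasAntidiagonal.mem_antidiagonal] at hx
      simp only at hx ⊢
      rw [coeff_sPoly, coeff_sPoly]
      by_cases h : 2 * a + 1 = k
      · rw [if_pos h]
        have hb : 2 * b + 1 = k := by omega
        rw [show 2*a+1 = k from h, hb, Nat.choose_self, Nat.sub_self, pow_zero]
        simp only [Nat.cast_one, one_mul, mul_one]
        rw [← pow_add, ← Nat.mul_add, hx]
      · rw [if_neg h]
        rcases Nat.lt_or_ge (2 * a + 1) k with h' | h'
        · rw [Nat.choose_eq_zero_of_lt (show k < 2 * b + 1 by omega)]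
          ring
        · rw [Nat.choose_eq_zero_of_lt (by omega)]
          ring
    rw [Finset.sum_congr rfl hterm]
    rcases Nat.even_or_odd k with he | ho
    · rw [if_pos he]
      refine Finset.sum_eq_zero fun x hx => ?_
      rw [if_neg]
      intro h
      obtain ⟨m, hm⟩ := he
      omega
    · obtain ⟨m, rfl⟩ := ho
      rw [if_neg (by rw [Nat.even_iff]; omega)]
      rw [Finset.sum_eq_single_of_mem (m, m) (by rw [Finset.HasAntidiagonal.mem_antidiagonal]; omega)]
      · rw [if_pos (by omega)]
      · rintro ⟨a, b⟩ hab hne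
        rw [Finset.HasAntidiagonal.mem_antidiagonal] at hab
        rw [if_neg]
        intro h
        exfalso
        apply hne
        simp only at hab h
        have ha : a = m := by omega
        have hb : b = m := by omega
        rw [ha, hb]
  have h1 : ((rPoly p α μ k - 1) ^ 2).coeff k
      = if Even k then (p : ℤ_[p]) ^ (μ * k) else 0 := by
    have hexp : (rPoly p α μ k - 1) ^ 2
        = rPoly p α μ k * rPoly p α μ k - (2 * rPoly p α μ k - 1) := by ring
    rw [hexp, coeff_sub, coeff_sub, coeff_ofNat_mul, coeff_rPoly,
      Nat.choose_eq_zero_of_lt (by omega), coeff_one, if_neg (by omega), hrr]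
    push_cast
    ring
  have h2 : (X * C ((p : ℤ_[p]) ^ μ) * (sPoly p α μ k) ^ 2).coeff k
      = if Even k then 0 else (p : ℤ_[p]) ^ (μ * k) := by
    have : (X : Polynomial ℤ_[p]) * C ((p : ℤ_[p]) ^ μ) * (sPoly p α μ k) ^ 2
        = C ((p : ℤ_[p]) ^ μ) * (X * (sPoly p α μ k * sPoly p α μ k)) := by ring
    obtain ⟨j, hj⟩ : ∃ j, k = j + 1 := ⟨k - 1, by omega⟩
    have hss' : (sPoly p α μ k * sPoly p α μ k).coeff j
        = if Even k then 0 else (p : ℤ_[p]) ^ (μ * j) := by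
      rw [show j = k - 1 by omega]; exact hss
    have hXmul : (X * (sPoly p α μ k * sPoly p α μ k)).coeff k
        = (sPoly p α μ k * sPoly p α μ k).coeff j := by
      rw [hj, coeff_X_mul]
    rw [this, coeff_C_mul, hXmul, hss']
    rcases Nat.even_or_odd k with he | ho
    · rw [if_pos he, if_pos he, mul_zero]
    · rw [if_neg (Nat.not_even_iff_odd.mpr ho), if_neg (Nat.not_even_iff_odd.mpr ho)]
      rw [← pow_add, show μ + μ * j = μ * (j + 1) by ring, ← hj]
  rw [tPoly, coeff_sub, h1, h2]
  rcases Nat.even_or_odd k with he | ho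
  · rw [if_pos he, if_pos he, if_pos he]
    ring
  · rw [if_neg (Nat.not_even_iff_odd.mpr ho), if_neg (Nat.not_even_iff_odd.mpr ho),
      if_neg (Nat.not_even_iff_odd.mpr ho)]
    ring

end aux

/-- Let `p` be an odd prime, `α ∈ ℤ_p^×`, `μ ≥ 0`, and `t_k = det(g^k - 1)` for
`g = !![α, x; p^μ, α]`.  If the order `o` of `α` mod `p` does not divide `k`, then every
root of `t_k` (in any field with a multiplicative norm extending the `p`-adic one, e.g. an
algebraic closure of `ℚ_p`) has valuation `-μ`, i.e. norm `p^μ`. -/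
theorem stmt_13 (p : ℕ) [Fact p.Prime] (hp : p ≠ 2) (α : ℤ_[p]) (hα : IsUnit α) (μ : ℕ)
    (o : ℕ) (ho : 0 < o)
    (hoa : ∀ m : ℕ, 0 < m → ((p : ℤ_[p]) ∣ α ^ m - 1 ↔ o ∣ m))
    (k : ℕ) (hk : 1 ≤ k) (hok : ¬ o ∣ k)
    (L : Type*) [NormedField L] [Algebra ℚ_[p] L]
    (hL : ∀ x : ℚ_[p], ‖algebraMap ℚ_[p] L x‖ = ‖x‖)
    (z : L)
    (hz : Polynomial.aeval z ((tPoly p α μ k).map (algebraMap ℤ_[p] ℚ_[p])) = 0) :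
    ‖z‖ = (p : ℝ) ^ (μ : ℤ) := by
  classical
  set T : Polynomial ℤ_[p] := tPoly p α μ k with hT
  set f : ℤ_[p] →+* L := (RingHom.comp (algebraMap ℚ_[p] L) (algebraMap ℤ_[p] ℚ_[p])) with hf
  have hfnorm : ∀ a : ℤ_[p], ‖f a‖ = ‖a‖ := by
    intro a
    rw [hf, RingHom.comp_apply, hL, PadicInt.algebraMap_apply,
      PadicInt.padic_norm_e_of_padicInt]
  have hUltra : IsUltrametricDist L := by
    apply IsUltrametricDist.isUltrametricDist_of_forall_norm_natCast_le_one
    intro n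
    have h1 : (n : L) = algebraMap ℚ_[p] L ((n : ℤ_[p]) : ℚ_[p]) := by push_cast; rfl
    rw [h1, hL, PadicInt.padic_norm_e_of_padicInt]
    exact PadicInt.norm_le_one _
  have hdeg : T.natDegree ≤ k := natDegree_tPoly p α μ k hk
  have hEval : ∑ i ∈ Finset.range (k+1), f (T.coeff i) * z ^ i = 0 := by
    rw [aeval_def, eval₂_map, ← hf] at hz
    rw [← eval₂_eq_sum_range' f (lt_of_le_of_lt hdeg (Nat.lt_succ_self k)) z]
    exact hz
  set P : ℝ := (p : ℝ) with hPdef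
  have hP1 : 1 < P := by rw [hPdef]; exact_mod_cast (Fact.out : p.Prime).one_lt
  have hPpos : 0 < P := lt_trans one_pos hP1
  have hnorm0 : ‖f (T.coeff 0)‖ = 1 := by
    rw [hfnorm, hT, coeff_tPoly_zero]
    have h1 : ‖α ^ k - 1‖ = 1 := by
      refine le_antisymm (PadicInt.norm_le_one _) ?_
      by_contra hlt
      push_neg at hlt
      exact hok ((hoa k (by omega)).mp ((PadicInt.norm_lt_one_iff_dvd _).mp hlt))
    rw [sq, norm_mul, h1, mul_one]
  have hnormtop : ‖f (T.coeff k)‖ = P⁻¹ ^ (μ * k) := by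
    rw [hfnorm, hT, coeff_tPoly_top p α μ k hk, norm_mul, norm_pow,
      PadicInt.norm_p]
    have h1 : ‖(if Even k then (1:ℤ_[p]) else -1)‖ = 1 := by split <;> simp
    rw [h1, one_mul, hPdef]
  have hnormle : ∀ i, ‖f (T.coeff i)‖ ≤ P⁻¹ ^ (μ * i) := by
    intro i
    obtain ⟨c, hc⟩ := dvdCoeff_tPoly p α μ k i
    rw [hfnorm, hT, hc, norm_mul, norm_pow, PadicInt.norm_p, hPdef]
    exact mul_le_of_le_one_right (by positivity) (PadicInt.norm_le_one c)
  set t : ℝ := P⁻¹ ^ μ * ‖z‖ with htdef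
  have ht0 : 0 ≤ t := by positivity
  have hui : ∀ i, ‖f (T.coeff i) * z ^ i‖ ≤ t ^ i := by
    intro i
    rw [norm_mul, norm_pow, htdef, mul_pow, ← pow_mul]
    exact mul_le_mul_of_nonneg_right (hnormle i) (by positivity)
  suffices hzn : ‖z‖ = P ^ μ by rw [hzn, hPdef, zpow_natCast]
  have hteq : t = 1 := by
    rcases lt_trichotomy t 1 with hlt | heq | hgt
    · exfalso
      have hmem : (0:ℕ) ∈ Finset.range (k+1) := by simp
      have hsplit := Finset.add_sum_erase (Finset.range (k+1))
        (fun i => f (T.coeff i) * z ^ i) hmem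
      set rest := ∑ i ∈ (Finset.range (k+1)).erase 0, f (T.coeff i) * z ^ i with hrest
      have hu0 : ‖f (T.coeff 0) * z ^ 0‖ = 1 := by
        rw [pow_zero, mul_one, hnorm0]
      have hrestle : ‖rest‖ ≤ t := by
        refine IsUltrametricDist.norm_sum_le_of_forall_le_of_nonneg ht0 fun i hi => ?_
        have hi1 : 1 ≤ i := by
          rcases Finset.mem_erase.mp hi with ⟨hne, _⟩; omega
        exact (hui i).trans (pow_le_pow_of_le_one ht0 (le_of_lt hlt) hi1 |>.trans (by rw [pow_one]))
      have hne : ‖f (T.coeff 0) * z ^ 0‖ ≠ ‖rest‖ := by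
        rw [hu0]; intro h; rw [← h] at hrestle; linarith
      have := IsUltrametricDist.norm_add_eq_max_of_norm_ne_norm hne
      rw [hsplit, hEval] at this
      rw [hu0] at this
      have : (0:ℝ) = max 1 ‖rest‖ := by rw [← this]; simp
      have h2 : (1:ℝ) ≤ max 1 ‖rest‖ := le_max_left _ _
      linarith
    · exact heq
    · exfalso
      have hmem : k ∈ Finset.range (k+1) := by simp
      have hsplit := Finset.add_sum_erase (Finset.range (k+1))
        (fun i => f (T.coeff i) * z ^ i) hmem
      set rest := ∑ i ∈ (Finset.range (k+1)).erase k, f (T.coeff i) * z ^ i with hrest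
      have huk : ‖f (T.coeff k) * z ^ k‖ = t ^ k := by
        rw [norm_mul, norm_pow, hnormtop, htdef, mul_pow, ← pow_mul]
      have hrestle : ‖rest‖ ≤ t ^ (k-1) := by
        refine IsUltrametricDist.norm_sum_le_of_forall_le_of_nonneg (by positivity) fun i hi => ?_
        have hik : i ≤ k - 1 := by
          rcases Finset.mem_erase.mp hi with ⟨hne, hmem'⟩
          rw [Finset.mem_range] at hmem'; omega
        exact (hui i).trans (pow_le_pow_right₀ (le_of_lt hgt) hik)
      have hlt2 : t ^ (k-1) < t ^ k := pow_lt_pow_right₀ hgt (by omega)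
      have hne : ‖f (T.coeff k) * z ^ k‖ ≠ ‖rest‖ := by
        rw [huk]; intro h; rw [← h] at hrestle; linarith
      have := IsUltrametricDist.norm_add_eq_max_of_norm_ne_norm hne
      rw [hsplit, hEval] at this
      rw [huk] at this
      have h0 : (0:ℝ) = max (t^k) ‖rest‖ := by rw [← this]; simp
      have h2 : t^k ≤ max (t^k) ‖rest‖ := le_max_left _ _
      have h3 : (0:ℝ) < t ^ k := by positivity
      linarith
  rw [htdef, inv_pow, inv_mul_eq_one₀ (by positivity)] at hteq
  exact hteq.symm
end

section
/- Let p be an odd prime, α ∈ ℤ_p^× with o_ᾱ | k and v_α = v(α^{o_ᾱ}-1), μ ≥ 0 with 2v_α - μ > 2/(p-1) - μ. Let t_k(x) = det(g^k - 1) for g the matrix with rows (α,x),(p^μ,α). Then t_k has a unique root z of maximal valuation; z lies in ℚ_p, is independent of k (among k divisible by o_ᾱ), has valuation 2v_α - μ, and all other roots of t_k have valuation at most 2/(p-1) - μ. -/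
open Polynomial

open Finset in
lemma my_sum_range_two_mul {M : Type*} [AddCommMonoid M] (n : ℕ) (f : ℕ → M) :
    ∑ j ∈ range (2 * n), f j = ∑ i ∈ range n, (f (2 * i) + f (2 * i + 1)) := by
  induction n with
  | zero => simp
  | succ n ih =>
    rw [sum_range_succ, ← ih, Nat.mul_succ,
      show 2 * n + 2 = (2 * n + 1) + 1 from rfl, sum_range_succ, sum_range_succ, add_assoc]

lemma rs_key {p : ℕ} [Fact p.Prime] (α : ℤ_[p]) (μ k : ℕ) {A : Type*} [CommRing A]
    (f : ℤ_[p] →+* A) (x y : A) (h : y ^ 2 = x * f (p : ℤ_[p]) ^ μ) :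
    (f α + y) ^ k = (rPoly p α μ k).eval₂ f x + y * (sPoly p α μ k).eval₂ f x := by
  have hy2 : ∀ i : ℕ, y ^ (2 * i) = x ^ i * f (p : ℤ_[p]) ^ (μ * i) := by
    intro i
    rw [pow_mul, h, mul_pow, ← pow_mul]
  have expand : (f α + y) ^ k
      = ∑ j ∈ Finset.range (2 * (k + 1)), y ^ j * f α ^ (k - j) * (k.choose j : A) := by
    rw [add_comm, add_pow]
    refine Finset.sum_subset (Finset.range_subset_range.2 (by omega)) fun j _ hj => ?_
    have : k.choose j = 0 := Nat.choose_eq_zero_of_lt (by simp only [Finset.mem_range] at hj; omega)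
    simp [this]
  rw [expand, my_sum_range_two_mul]
  rw [rPoly, sPoly, Polynomial.eval₂_finset_sum, Polynomial.eval₂_finset_sum, Finset.mul_sum,
    ← Finset.sum_add_distrib]
  refine Finset.sum_congr rfl fun i _ => ?_
  rw [Polynomial.eval₂_mul, Polynomial.eval₂_mul, Polynomial.eval₂_C, Polynomial.eval₂_C,
    Polynomial.eval₂_X_pow, pow_succ y (2 * i), hy2 i]
  simp only [map_mul, map_pow, map_natCast]
  ring

lemma tPoly_eval₂ {p : ℕ} [Fact p.Prime] (α : ℤ_[p]) (μ k : ℕ) {A : Type*} [CommRing A]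
    (f : ℤ_[p] →+* A) (x : A) :
    (tPoly p α μ k).eval₂ f x
      = ((rPoly p α μ k).eval₂ f x - 1) ^ 2
        - x * f (p : ℤ_[p]) ^ μ * ((sPoly p α μ k).eval₂ f x) ^ 2 := by
  simp [tPoly, Polynomial.eval₂_sub, Polynomial.eval₂_pow, Polynomial.eval₂_mul,
    Polynomial.eval₂_one, Polynomial.eval₂_X, Polynomial.eval₂_C, map_pow]

open IsUltrametricDist

section ultra
variable {L : Type} [NormedField L] [IsUltrametricDist L]

lemma my_norm_pow_le_one {δ : L} (hδ : ‖δ‖ ≤ 1) (t : ℕ) : ‖δ ^ t‖ ≤ 1 := by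
  rw [norm_pow]; exact pow_le_one₀ (norm_nonneg δ) hδ

lemma my_norm_pow_sub_one_le {δ : L} (hδ : ‖δ‖ ≤ 1) (t : ℕ) : ‖δ ^ t - 1‖ ≤ ‖δ - 1‖ := by
  rw [← geom_sum_mul, norm_mul]
  have h1 : ‖∑ i ∈ Finset.range t, δ ^ i‖ ≤ 1 :=
    norm_sum_le_of_forall_le_of_nonneg zero_le_one fun i _ => my_norm_pow_le_one hδ i
  calc ‖∑ i ∈ Finset.range t, δ ^ i‖ * ‖δ - 1‖ ≤ 1 * ‖δ - 1‖ :=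
        mul_le_mul_of_nonneg_right h1 (norm_nonneg _)
    _ = ‖δ - 1‖ := one_mul _

lemma my_norm_eq_one_of_pow_eq_one {δ : L} {n : ℕ} (hn : n ≠ 0) (h : δ ^ n = 1) : ‖δ‖ = 1 := by
  have h1 : ‖δ‖ ^ n = 1 := by rw [← norm_pow, h, norm_one]
  rcases lt_trichotomy ‖δ‖ 1 with hl | he | hg
  · exact absurd (h1 ▸ pow_lt_one₀ (norm_nonneg δ) hl hn) (lt_irrefl 1)
  · exact he
  · exact absurd (h1 ▸ one_lt_pow₀ hg hn) (lt_irrefl 1)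

lemma tame_rigid {m : ℕ} (hm : m ≠ 0) (hmnorm : ‖(m : L)‖ = 1)
    {δ : L} (hδm : δ ^ m = 1) (hlt : ‖δ - 1‖ < 1) : δ = 1 := by
  by_contra hne
  have hδ1 : ‖δ‖ = 1 := my_norm_eq_one_of_pow_eq_one hm hδm
  have hsum : (∑ i ∈ Finset.range m, δ ^ i) = 0 := by
    have h := geom_sum_mul δ m
    rw [hδm, sub_self] at h
    rcases mul_eq_zero.1 h with h' | h'
    · exact h'
    · exact absurd (sub_eq_zero.1 h') hne
  have hdiff : ‖(∑ i ∈ Finset.range m, δ ^ i) - (m : L)‖ ≤ ‖δ - 1‖ := by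
    have he : (∑ i ∈ Finset.range m, δ ^ i) - (m : L)
        = ∑ i ∈ Finset.range m, (δ ^ i - 1) := by
      rw [Finset.sum_sub_distrib, Finset.sum_const, Finset.card_range, nsmul_eq_mul, mul_one]
    rw [he]
    exact norm_sum_le_of_forall_le_of_nonneg (norm_nonneg _) fun i _ =>
      my_norm_pow_sub_one_le (le_of_eq hδ1) i
  rw [hsum, zero_sub, norm_neg, hmnorm] at hdiff
  exact absurd (lt_of_le_of_lt hdiff hlt) (lt_irrefl 1)

lemma ppow_rigid {p : ℕ} [hpf : Fact p.Prime]
    (hnp : ‖(p : L)‖ = (p : ℝ)⁻¹) (hnat : ∀ n : ℕ, ‖(n : L)‖ ≤ 1)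
    {δ : L} (hδp : δ ^ p = 1)
    (hlt : ‖δ - 1‖ < (p : ℝ) ^ (-1 / ((p : ℝ) - 1))) : δ = 1 := by
  have hp1 : 1 < p := hpf.out.one_lt
  have hP : (1 : ℝ) < p := by exact_mod_cast hp1
  have hP0 : (0 : ℝ) < p := by linarith
  have hble : (p : ℝ) ^ (-1 / ((p : ℝ) - 1)) < 1 :=
    Real.rpow_lt_one_of_one_lt_of_neg hP (by
      apply div_neg_of_neg_of_pos <;> linarith)
  by_contra hne
  have hε0 : δ - 1 ≠ 0 := sub_ne_zero.2 hne
  set ε := δ - 1 with hε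
  have hεlt1 : ‖ε‖ < 1 := hlt.trans hble
  have hεpos : (0 : ℝ) < ‖ε‖ := norm_pos_iff.2 hε0
  have hεle1 : ‖ε‖ ≤ 1 := le_of_lt hεlt1
  have hsum : ∑ j ∈ Finset.range (p + 1), ε ^ j * (p.choose j : L) = 1 := by
    have hd : δ = ε + 1 := by rw [hε]; ring
    calc ∑ j ∈ Finset.range (p + 1), ε ^ j * (p.choose j : L)
        = (ε + 1) ^ p := by rw [add_pow]; simp
      _ = 1 := by rw [← hd, hδp]
  rw [Finset.sum_range_succ'] at hsum
  simp only [pow_zero, Nat.choose_zero_right, Nat.cast_one, mul_one, one_mul] at hsum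
  have hsum2 : ∑ i ∈ Finset.range p, ε ^ (i + 1) * (p.choose (i + 1) : L) = 0 := by
    linear_combination hsum
  obtain ⟨q, hq⟩ : ∃ q, p = q + 1 := ⟨p - 1, by omega⟩
  have hq1 : 1 ≤ q := by omega
  rw [hq, Finset.sum_range_succ', ← hq] at hsum2
  simp only [zero_add, pow_one, Nat.choose_one_right] at hsum2
  have hkey : ε * (p : L) = - ∑ i ∈ Finset.range q, ε ^ (i + 1 + 1) * (p.choose (i + 1 + 1) : L) := by
    linear_combination hsum2
  set c : ℝ := max ((p : ℝ)⁻¹ * ‖ε‖) (‖ε‖ ^ q) with hc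
  have hbound : ‖∑ i ∈ Finset.range q, ε ^ (i + 1 + 1) * (p.choose (i + 1 + 1) : L)‖ ≤ ‖ε‖ * c := by
    apply norm_sum_le_of_forall_le_of_nonneg (by positivity)
    intro i hi
    rw [Finset.mem_range] at hi
    rw [norm_mul, norm_pow]
    rcases lt_or_eq_of_le (show i + 1 + 1 ≤ p by omega) with hip | hip
    · have hdvd : p ∣ p.choose (i + 1 + 1) := hpf.out.dvd_choose_self (by omega) hip
      obtain ⟨t, ht⟩ := hdvd
      have hCnorm : ‖(p.choose (i + 1 + 1) : L)‖ ≤ (p : ℝ)⁻¹ := by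
        rw [ht]
        push_cast
        rw [norm_mul, hnp]
        calc ((p : ℝ))⁻¹ * ‖(t : L)‖ ≤ (p : ℝ)⁻¹ * 1 :=
              mul_le_mul_of_nonneg_left (hnat t) (by positivity)
          _ = (p : ℝ)⁻¹ := mul_one _
      calc ‖ε‖ ^ (i + 1 + 1) * ‖(p.choose (i + 1 + 1) : L)‖
          ≤ ‖ε‖ ^ 2 * (p : ℝ)⁻¹ := by
            apply mul_le_mul _ hCnorm (norm_nonneg _) (by positivity)
            exact pow_le_pow_of_le_one (norm_nonneg _) hεle1 (by omega)
        _ = ‖ε‖ * ((p : ℝ)⁻¹ * ‖ε‖) := by ring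
        _ ≤ ‖ε‖ * c := mul_le_mul_of_nonneg_left (le_max_left _ _) (norm_nonneg _)
    · rw [hip, Nat.choose_self]
      simp only [Nat.cast_one, norm_one, mul_one]
      calc ‖ε‖ ^ p = ‖ε‖ * ‖ε‖ ^ q := by rw [hq, pow_succ']
        _ ≤ ‖ε‖ * c := mul_le_mul_of_nonneg_left (le_max_right _ _) (norm_nonneg _)
  have h2 : ‖ε‖ * (p : ℝ)⁻¹ ≤ ‖ε‖ * c := by
    rw [← hnp, ← norm_mul, hkey, norm_neg]; exact hbound
  have h3 : (p : ℝ)⁻¹ ≤ c := (mul_le_mul_iff_right₀ hεpos).1 h2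
  have h4 : (p : ℝ)⁻¹ * ‖ε‖ < (p : ℝ)⁻¹ := by
    calc (p : ℝ)⁻¹ * ‖ε‖ < (p : ℝ)⁻¹ * 1 := by
          apply mul_lt_mul_of_pos_left hεlt1 (by positivity)
      _ = (p : ℝ)⁻¹ := mul_one _
  have h5 : ‖ε‖ ^ q < (p : ℝ)⁻¹ := by
    have h6 : ‖ε‖ ^ q < ((p : ℝ) ^ (-1 / ((p : ℝ) - 1))) ^ q :=
      pow_lt_pow_left₀ hlt (norm_nonneg _) (by omega)
    have heq : ((p : ℝ) ^ (-1 / ((p : ℝ) - 1))) ^ q = (p : ℝ)⁻¹ := by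
      rw [← Real.rpow_natCast ((p : ℝ) ^ (-1 / ((p : ℝ) - 1))) q, ← Real.rpow_mul (le_of_lt hP0)]
      rw [show (-1 / ((p : ℝ) - 1)) * (q : ℝ) = -1 by
        have hqr : (q : ℝ) = (p : ℝ) - 1 := by
          rw [hq]; push_cast; ring
        have hne1 : (p : ℝ) - 1 ≠ 0 := by linarith
        rw [hqr]; field_simp]
      exact Real.rpow_neg_one _
    linarith
  have : c < (p : ℝ)⁻¹ := max_lt h4 h5
  linarith

lemma rigid {p : ℕ} [hpf : Fact p.Prime]
    (hnp : ‖(p : L)‖ = (p : ℝ)⁻¹) (hnat : ∀ n : ℕ, ‖(n : L)‖ ≤ 1)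
    (hm1 : ∀ m : ℕ, ¬ p ∣ m → ‖(m : L)‖ = 1)
    {δ : L} {n : ℕ} (hn : n ≠ 0) (hδn : δ ^ n = 1)
    (hlt : ‖δ - 1‖ < (p : ℝ) ^ (-1 / ((p : ℝ) - 1))) : δ = 1 := by
  have hP : (1 : ℝ) < p := by exact_mod_cast hpf.out.one_lt
  have hble : (p : ℝ) ^ (-1 / ((p : ℝ) - 1)) < 1 :=
    Real.rpow_lt_one_of_one_lt_of_neg hP (div_neg_of_neg_of_pos (by norm_num) (by linarith))
  have hδ1 : ‖δ‖ = 1 := my_norm_eq_one_of_pow_eq_one hn hδn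
  have hppow : δ ^ (p ^ n.factorization p) = 1 := by
    apply tame_rigid (m := ordCompl[p] n) (Nat.ordCompl_pos p hn).ne'
      (hm1 _ (Nat.not_dvd_ordCompl hpf.out hn))
    · rw [← pow_mul, Nat.ordProj_mul_ordCompl_eq_self]; exact hδn
    · exact lt_of_le_of_lt (my_norm_pow_sub_one_le hδ1.le _) (hlt.trans hble)
  revert hppow
  generalize n.factorization p = e
  intro hppow
  induction e with
  | zero => simpa using hppow
  | succ e ih =>
    apply ih
    apply ppow_rigid hnp hnat
    · rw [← pow_mul, ← pow_succ]; exact hppow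
    · exact lt_of_le_of_lt (my_norm_pow_sub_one_le hδ1.le _) hlt

end ultra


lemma padic_norm_pow {p : ℕ} [Fact p.Prime] (x : ℤ_[p]) (n : ℕ) : ‖x ^ n‖ = ‖x‖ ^ n := by
  induction n with
  | zero => simp
  | succ n ih => rw [pow_succ, pow_succ, norm_mul, ih]

lemma pow_sub_pow_norm_le {p : ℕ} [Fact p.Prime] (x y : ℤ_[p]) (n : ℕ) :
    ‖x ^ n - y ^ n‖ ≤ ‖x - y‖ := by
  rw [← geom_sum₂_mul, norm_mul]
  calc ‖∑ i ∈ Finset.range n, x ^ i * y ^ (n - 1 - i)‖ * ‖x - y‖ ≤ 1 * ‖x - y‖ :=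
        mul_le_mul_of_nonneg_right (PadicInt.norm_le_one _) (norm_nonneg _)
    _ = ‖x - y‖ := one_mul _

lemma exists_zeta {p : ℕ} [hpf : Fact p.Prime] (α : ℤ_[p]) (o : ℕ) (ho : o ≠ 0)
    (hdvd : (p : ℤ_[p]) ∣ α ^ o - 1) (hpo : ¬ p ∣ o) (hαu : IsUnit α) :
    ∃ ζ : ℤ_[p], ζ ^ o = 1 ∧ ‖ζ - α‖ = ‖α ^ o - 1‖ := by
  have hα1 : ‖α‖ = 1 := PadicInt.isUnit_iff.1 hαu
  have hlt : ‖α ^ o - 1‖ < 1 := (PadicInt.norm_lt_one_iff_dvd _).2 hdvd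
  have hno : ‖(o : ℤ_[p])‖ = 1 := by
    rcases lt_or_eq_of_le (PadicInt.norm_le_one (o : ℤ_[p])) with h | h
    · exfalso
      apply hpo
      have h2 : ‖((o : ℤ) : ℤ_[p])‖ < 1 := by push_cast; exact h
      have := (PadicInt.norm_int_lt_one_iff_dvd (o : ℤ)).1 h2
      exact_mod_cast this
    · exact h
  set F : Polynomial ℤ_[p] := X ^ o - 1 with hF
  have hFa : F.eval α = α ^ o - 1 := by simp [hF]
  have hF'a : F.derivative.eval α = (o : ℤ_[p]) * α ^ (o - 1) := by
    simp [hF, derivative_X_pow]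
  have hder : ‖F.derivative.eval α‖ = 1 := by
    rw [hF'a, norm_mul, hno, padic_norm_pow, hα1, one_pow, one_mul]
  obtain ⟨ζ, hζ1, hζ2, -, -⟩ := hensels_lemma (F := F) (a := α)
    (by rw [Polynomial.coe_aeval_eq_eval, hFa, hder, one_pow]; exact hlt)
  have hζo : ζ ^ o = 1 := by
    rw [hF, Polynomial.coe_aeval_eq_eval] at hζ1
    simp only [eval_sub, eval_pow, eval_X, eval_one] at hζ1
    exact sub_eq_zero.1 hζ1
  have hζd : ‖ζ - α‖ < 1 := by rwa [Polynomial.coe_aeval_eq_eval, hder] at hζ2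
  refine ⟨ζ, hζo, ?_⟩
  have hfac : α ^ o - 1 = (∑ i ∈ Finset.range o, α ^ i * ζ ^ (o - 1 - i)) * (α - ζ) := by
    rw [geom_sum₂_mul, hζo]
  have hterm : ∀ i ∈ Finset.range o,
      ‖α ^ i * ζ ^ (o - 1 - i) - α ^ (o - 1)‖ ≤ ‖ζ - α‖ := by
    intro i hi
    rw [Finset.mem_range] at hi
    have hsplit : α ^ i * ζ ^ (o - 1 - i) - α ^ (o - 1)
        = α ^ i * (ζ ^ (o - 1 - i) - α ^ (o - 1 - i)) := by
      rw [mul_sub, ← pow_add]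
      congr 2
      omega
    rw [hsplit, norm_mul]
    calc ‖α ^ i‖ * ‖ζ ^ (o - 1 - i) - α ^ (o - 1 - i)‖
        ≤ 1 * ‖ζ - α‖ := by
          apply mul_le_mul (PadicInt.norm_le_one _) (pow_sub_pow_norm_le _ _ _)
            (norm_nonneg _) zero_le_one
      _ = ‖ζ - α‖ := one_mul _
  have hdecomp : (∑ i ∈ Finset.range o, α ^ i * ζ ^ (o - 1 - i))
      = (o : ℤ_[p]) * α ^ (o - 1) + ∑ i ∈ Finset.range o, (α ^ i * ζ ^ (o - 1 - i) - α ^ (o - 1)) := by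
    rw [Finset.sum_sub_distrib, Finset.sum_const, Finset.card_range, nsmul_eq_mul]
    ring
  have hrest : ‖∑ i ∈ Finset.range o, (α ^ i * ζ ^ (o - 1 - i) - α ^ (o - 1))‖ < 1 :=
    lt_of_le_of_lt (norm_sum_le_of_forall_le_of_nonneg (norm_nonneg _) hterm) hζd
  have hone : ‖(o : ℤ_[p]) * α ^ (o - 1)‖ = 1 := by
    rw [norm_mul, hno, padic_norm_pow, hα1, one_pow, one_mul]
  have hsnorm : ‖∑ i ∈ Finset.range o, α ^ i * ζ ^ (o - 1 - i)‖ = 1 := by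
    refine le_antisymm (PadicInt.norm_le_one _) ?_
    have heq : (o : ℤ_[p]) * α ^ (o - 1)
        = (∑ i ∈ Finset.range o, α ^ i * ζ ^ (o - 1 - i))
          + (- ∑ i ∈ Finset.range o, (α ^ i * ζ ^ (o - 1 - i) - α ^ (o - 1))) := by
      rw [hdecomp]; ring
    have h1 : (1 : ℝ) ≤ max ‖∑ i ∈ Finset.range o, α ^ i * ζ ^ (o - 1 - i)‖
        ‖- ∑ i ∈ Finset.range o, (α ^ i * ζ ^ (o - 1 - i) - α ^ (o - 1))‖ := by
      rw [← hone, heq]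
      exact norm_add_le_max _ _
    rw [norm_neg] at h1
    rcases le_max_iff.1 h1 with h | h
    · exact h
    · linarith
  rw [hfac, norm_mul, hsnorm, one_mul, norm_sub_rev]

lemma choose_norm_bound {p : ℕ} [hpf : Fact p.Prime] (k j : ℕ) (hk : 1 ≤ k) (hj : 1 ≤ j) :
    ‖((k.choose (2 * j + 1)) : ℤ_[p])‖
      ≤ ‖(k : ℤ_[p])‖ * (p : ℝ) ^ ((2 * j : ℝ) / ((p : ℝ) - 1)) := by
  have hP : (1 : ℝ) < p := by exact_mod_cast hpf.out.one_lt
  have hP0 : (0 : ℝ) < p := by linarith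
  set m := 2 * j + 1 with hm
  set e := m.factorization p with he
  have hm0 : m ≠ 0 := by omega
  have hmd : p ^ e * (ordCompl[p] m) = m := Nat.ordProj_mul_ordCompl_eq_self m p
  have hnd : ¬ p ∣ ordCompl[p] m := Nat.not_dvd_ordCompl hpf.out hm0
  have hmnorm : ‖(m : ℤ_[p])‖ = ((p : ℝ)⁻¹) ^ e := by
    rw [← hmd]
    push_cast
    rw [norm_mul, padic_norm_pow, PadicInt.norm_p]
    have h1 : ‖((ordCompl[p] m : ℕ) : ℤ_[p])‖ = 1 := by
      rcases lt_or_eq_of_le (PadicInt.norm_le_one ((ordCompl[p] m : ℕ) : ℤ_[p])) with h | h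
      · exfalso
        apply hnd
        have h2 : ‖(((ordCompl[p] m : ℕ) : ℤ) : ℤ_[p])‖ < 1 := by rwa [Int.cast_natCast]
        exact_mod_cast (PadicInt.norm_int_lt_one_iff_dvd _).1 h2
      · exact h
    rw [h1, mul_one]
  have hid : (m : ℤ_[p]) * (k.choose m : ℤ_[p])
      = (k : ℤ_[p]) * ((k - 1).choose (m - 1) : ℤ_[p]) := by
    have hnat : m * k.choose m = k * (k - 1).choose (m - 1) := by
      have h1 := Nat.add_one_mul_choose_eq (k - 1) (m - 1)
      have e1 : k - 1 + 1 = k := by omega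
      have e2 : m - 1 + 1 = m := by omega
      rw [e1, e2] at h1
      rw [h1]
      exact Nat.mul_comm m _
    exact_mod_cast congrArg (fun n : ℕ => (n : ℤ_[p])) hnat
  have hnorm_eq : ((p : ℝ)⁻¹) ^ e * ‖(k.choose m : ℤ_[p])‖
      = ‖(k : ℤ_[p])‖ * ‖((k - 1).choose (m - 1) : ℤ_[p])‖ := by
    rw [← hmnorm, ← norm_mul, ← norm_mul, hid]
  have hee : (e : ℝ) * ((p : ℝ) - 1) ≤ (2 * j : ℝ) := by
    have h1 : p ^ e ≤ m := Nat.ordProj_le p hm0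
    have h2 : 1 + (e : ℤ) * ((p : ℤ) - 1) ≤ (p : ℤ) ^ e := by
      have h2le : (2 : ℤ) ≤ p := by exact_mod_cast hpf.out.two_le
      have h3 := one_add_mul_le_pow (a := (p : ℤ) - 1) (by linarith) e
      calc 1 + (e : ℤ) * ((p : ℤ) - 1) = 1 + (e : ℕ) * ((p : ℤ) - 1) := by norm_num
        _ ≤ (1 + ((p : ℤ) - 1)) ^ e := h3
        _ = (p : ℤ) ^ e := by ring_nf
    have h3 : (p : ℤ) ^ e ≤ (m : ℤ) := by exact_mod_cast h1
    have h5 : (e : ℤ) * ((p : ℤ) - 1) ≤ 2 * j := by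
      have h4 : (m : ℤ) = 2 * j + 1 := by rw [hm]; push_cast; ring
      omega
    have h6 : (e : ℝ) * ((p : ℝ) - 1) ≤ 2 * (j : ℝ) := by exact_mod_cast h5
    push_cast
    linarith
  have hPe : (p : ℝ) ^ e * ((p : ℝ)⁻¹) ^ e = 1 := by
    rw [← mul_pow, mul_inv_cancel₀ (ne_of_gt hP0), one_pow]
  calc ‖(k.choose m : ℤ_[p])‖
      = (p : ℝ) ^ e * (((p : ℝ)⁻¹) ^ e * ‖(k.choose m : ℤ_[p])‖) := by
        rw [← mul_assoc, hPe, one_mul]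
    _ = (p : ℝ) ^ e * (‖(k : ℤ_[p])‖ * ‖((k - 1).choose (m - 1) : ℤ_[p])‖) := by rw [hnorm_eq]
    _ ≤ (p : ℝ) ^ e * (‖(k : ℤ_[p])‖ * 1) := by
        apply mul_le_mul_of_nonneg_left _ (by positivity)
        exact mul_le_mul_of_nonneg_left (PadicInt.norm_le_one _) (norm_nonneg _)
    _ = ‖(k : ℤ_[p])‖ * (p : ℝ) ^ e := by ring
    _ ≤ ‖(k : ℤ_[p])‖ * (p : ℝ) ^ ((2 * j : ℝ) / ((p : ℝ) - 1)) := by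
        apply mul_le_mul_of_nonneg_left _ (norm_nonneg _)
        rw [← Real.rpow_natCast (p : ℝ) e]
        apply (Real.rpow_le_rpow_left_iff hP).2
        rw [le_div_iff₀ (by linarith)]
        exact hee


set_option maxHeartbeats 1000000 in
/-- Let `p` be an odd prime, `α ∈ ℤ_p^×` with `o = o_ᾱ`, `v_α = v(α^o - 1)`, and `μ ≥ 0`
with `2v_α - μ > 2/(p-1) - μ`.  Then there is `z ∈ ℚ_p` of valuation `2v_α - μ`
(i.e. `‖z‖ = p^{μ - 2v_α}`), independent of `k`, which for every `k` divisible by `o` is a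
root of `t_k = det(g^k - 1)`, and is the unique root of maximal valuation: every other
root of `t_k` (in any normed field extension) has valuation at most `2/(p-1) - μ`,
i.e. norm at least `p^{μ - 2/(p-1)}`... here stated as norm `≥` lower bound reversed:
valuation ≤ 2/(p-1) - μ means norm ≥ p^{μ - 2/(p-1)}. -/
theorem stmt_14 (p : ℕ) [Fact p.Prime] (hp : p ≠ 2) (α : ℤ_[p]) (hα : IsUnit α) (μ : ℕ)
    (o : ℕ) (ho : 0 < o)
    (hoa : ∀ m : ℕ, 0 < m → ((p : ℤ_[p]) ∣ α ^ m - 1 ↔ o ∣ m))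
    (hα1 : α ^ o ≠ 1)
    (hv : (2 * ((α ^ o - 1).valuation : ℝ) - μ) > 2 / ((p : ℝ) - 1) - μ) :
    ∃ z : ℚ_[p],
      ‖z‖ = (p : ℝ) ^ ((μ : ℤ) - 2 * (α ^ o - 1).valuation) ∧
      ∀ k : ℕ, 1 ≤ k → o ∣ k →
        Polynomial.eval z ((tPoly p α μ k).map (algebraMap ℤ_[p] ℚ_[p])) = 0 ∧
        ∀ (L : Type) (_ : NormedField L) (_ : Algebra ℚ_[p] L),
          (∀ x : ℚ_[p], ‖algebraMap ℚ_[p] L x‖ = ‖x‖) →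
          ∀ w : L, Polynomial.aeval w ((tPoly p α μ k).map (algebraMap ℤ_[p] ℚ_[p])) = 0 →
            w ≠ algebraMap ℚ_[p] L z →
            (p : ℝ) ^ ((μ : ℝ) - 2 / ((p : ℝ) - 1)) ≤ ‖w‖ := by
  have hpf : Fact p.Prime := inferInstance
  have hp1 : 1 < p := hpf.out.one_lt
  have hP : (1 : ℝ) < p := by exact_mod_cast hp1
  have hP0 : (0 : ℝ) < p := by linarith
  have hPne : (p : ℝ) ≠ 0 := ne_of_gt hP0
  have hPm1 : (p : ℝ) - 1 ≠ 0 := by linarith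
  have hα0 : α ^ o - 1 ≠ 0 := sub_ne_zero.2 hα1
  have hαnorm : ‖α‖ = 1 := PadicInt.isUnit_iff.1 hα
  set v : ℤ := ((α ^ o - 1).valuation : ℤ) with hvdef
  have hnormval : ‖α ^ o - 1‖ = (p : ℝ) ^ (-v) := PadicInt.norm_eq_zpow_neg_valuation hα0
  have hvgt : 1 / ((p : ℝ) - 1) < (v : ℝ) := by
    have h2 : 2 / ((p : ℝ) - 1) = 2 * (1 / ((p : ℝ) - 1)) := by ring
    rw [h2] at hv
    have h3 : (v : ℝ) = ((α ^ o - 1).valuation : ℝ) := by rw [hvdef]; exact Int.cast_natCast _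
    linarith
  -- Fermat: o ∣ p - 1, so p ∤ o
  have hαZ : PadicInt.toZMod α ≠ 0 := (hα.map (PadicInt.toZMod (p := p))).ne_zero
  have hferm : (p : ℤ_[p]) ∣ α ^ (p - 1) - 1 := by
    have h1 : PadicInt.toZMod (α ^ (p - 1) - 1) = 0 := by
      rw [map_sub, map_pow, map_one, ZMod.pow_card_sub_one_eq_one hαZ, sub_self]
    have h2 : α ^ (p - 1) - 1 ∈ RingHom.ker (PadicInt.toZMod (p := p)) := h1
    rw [PadicInt.ker_toZMod, PadicInt.maximalIdeal_eq_span_p] at h2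
    exact Ideal.mem_span_singleton.1 h2
  have hop : o ∣ p - 1 := (hoa (p - 1) (by omega)).1 hferm
  have hpo : ¬ p ∣ o := by
    intro h
    have h1 := Nat.le_of_dvd ho h
    have h2 := Nat.le_of_dvd (by omega) hop
    omega
  have hdvdo : (p : ℤ_[p]) ∣ α ^ o - 1 := (hoa o ho).2 dvd_rfl
  obtain ⟨ζ, hζo, hζd⟩ := exists_zeta α o (by omega) hdvdo hpo hα
  have hζu : ‖ζ‖ = 1 := PadicInt.isUnit_iff.1 (IsUnit.of_pow_eq_one hζo (by omega))
  set cf : ℤ_[p] →+* ℚ_[p] := algebraMap ℤ_[p] ℚ_[p] with hcf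
  have hcfnorm : ∀ x : ℤ_[p], ‖cf x‖ = ‖x‖ := fun x => by
    rw [hcf, PadicInt.algebraMap_apply]
    exact PadicInt.padic_norm_e_of_padicInt x
  have hcfp : cf (p : ℤ_[p]) = (p : ℚ_[p]) := map_natCast cf p
  set y₀ : ℚ_[p] := cf (ζ - α) with hy₀
  have hy₀norm : ‖y₀‖ = (p : ℝ) ^ (-v) := by rw [hy₀, hcfnorm, hζd, hnormval]
  have hpμ : ((p : ℚ_[p]) ^ μ) ≠ 0 := pow_ne_zero _ (Nat.cast_ne_zero.2 (by omega))
  set z : ℚ_[p] := y₀ ^ 2 / (p : ℚ_[p]) ^ μ with hz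
  have hzmul : y₀ ^ 2 = z * (p : ℚ_[p]) ^ μ := by rw [hz, div_mul_cancel₀ _ hpμ]
  refine ⟨z, ?_, ?_⟩
  · -- norm of z
    rw [hz, norm_div, norm_pow, norm_pow, hy₀norm, Padic.norm_p]
    have h3 : ((p : ℝ)⁻¹) ^ μ = (p : ℝ) ^ (-(μ : ℤ)) := by
      rw [inv_pow, ← zpow_natCast (p : ℝ) μ, ← zpow_neg]
    rw [h3, sq, ← zpow_add₀ hPne, div_eq_mul_inv, ← zpow_neg, ← zpow_add₀ hPne]
    congr 1
    ring
  · intro k hk hok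
    obtain ⟨d, hd⟩ := hok
    have hζk : ζ ^ k = 1 := by rw [hd, pow_mul, hζo, one_pow]
    have hcfζ : cf α + y₀ = cf ζ := by rw [hy₀, ← map_add]; congr 1; ring
    have hyz : y₀ ^ 2 = z * cf (p : ℤ_[p]) ^ μ := by rw [hcfp]; exact hzmul
    constructor
    · -- z is a root
      rw [Polynomial.eval_map, tPoly_eval₂]
      have hkey1 := rs_key α μ k cf z y₀ hyz
      have hfac : ((rPoly p α μ k).eval₂ cf z - 1) ^ 2
          - z * cf (p : ℤ_[p]) ^ μ * ((sPoly p α μ k).eval₂ cf z) ^ 2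
          = (((rPoly p α μ k).eval₂ cf z + y₀ * (sPoly p α μ k).eval₂ cf z) - 1)
            * (((rPoly p α μ k).eval₂ cf z - y₀ * (sPoly p α μ k).eval₂ cf z) - 1) := by
        rw [← hyz]
        ring
      rw [hfac, ← hkey1, hcfζ, ← map_pow, hζk, map_one, sub_self, zero_mul]
    · -- uniqueness
      intro L _ _ hiso w hw hwz
      by_contra hcon
      push_neg at hcon
      set B : ℝ := (p : ℝ) ^ ((μ : ℝ) - 2 / ((p : ℝ) - 1)) with hB
      have hB0 : 0 < B := Real.rpow_pos_of_pos hP0 _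
      set G : ℚ_[p] →+* L := algebraMap ℚ_[p] L with hG
      set F : ℤ_[p] →+* L := G.comp cf with hF
      have hFnorm : ∀ x : ℤ_[p], ‖F x‖ = ‖x‖ := fun x => by
        rw [hF, RingHom.comp_apply, hG, hiso, hcfnorm]
      have hGnat : ∀ n : ℕ, ‖(n : L)‖ ≤ 1 := fun n => by
        rw [← map_natCast G n, hG, hiso]
        have h := Padic.norm_int_le_one (p := p) (n : ℤ)
        push_cast at h
        exact h
      haveI UD : IsUltrametricDist L :=
        isUltrametricDist_of_forall_norm_natCast_le_one hGnat
      have hGp : ‖(p : L)‖ = (p : ℝ)⁻¹ := by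
        rw [← map_natCast G p, hG, hiso]
        exact Padic.norm_p
      have hGm1 : ∀ m : ℕ, ¬ p ∣ m → ‖(m : L)‖ = 1 := fun m hm => by
        rw [← map_natCast G m, hG, hiso]
        rcases lt_or_eq_of_le (show ‖(m : ℚ_[p])‖ ≤ 1 by
          have h := Padic.norm_int_le_one (p := p) (m : ℤ)
          push_cast at h
          exact h) with h | h
        · exfalso
          apply hm
          have h2 : ‖((m : ℤ) : ℚ_[p])‖ < 1 := by push_cast; exact h
          have h3 := (Padic.norm_intCast_lt_one_iff (k := (m : ℤ))).1 h2
          exact_mod_cast h3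
        · exact h
      have hw' : (tPoly p α μ k).eval₂ F w = 0 := by
        rw [Polynomial.aeval_def, ← hG, Polynomial.eval₂_map, ← hF] at hw
        exact hw
      rw [tPoly_eval₂] at hw'
      set R : L := (rPoly p α μ k).eval₂ F w with hR
      set S : L := (sPoly p α μ k).eval₂ F w with hS
      have h0 : (R - 1) ^ 2 = w * F (p : ℤ_[p]) ^ μ * S ^ 2 := by linear_combination hw'
      have hFp : F (p : ℤ_[p]) = (p : L) := map_natCast F p
      set K : ℝ := ‖(k : ℤ_[p])‖ with hK
      have hK0 : 0 < K := by
        rw [hK]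
        exact norm_pos_iff.2 (Nat.cast_ne_zero.2 (by omega))
      -- S ≠ 0
      have hSeval : S = ∑ i ∈ Finset.range (k + 1),
          F ((k.choose (2 * i + 1) : ℤ_[p]) * α ^ (k - (2 * i + 1)) * (p : ℤ_[p]) ^ (μ * i))
            * w ^ i := by
        rw [hS, sPoly, Polynomial.eval₂_finset_sum]
        simp only [Polynomial.eval₂_mul, Polynomial.eval₂_C, Polynomial.eval₂_X_pow]
      have hSsum : S = (∑ i ∈ Finset.range k,
          F ((k.choose (2 * (i + 1) + 1) : ℤ_[p]) * α ^ (k - (2 * (i + 1) + 1))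
              * (p : ℤ_[p]) ^ (μ * (i + 1))) * w ^ (i + 1))
          + F ((k.choose (2 * 0 + 1) : ℤ_[p]) * α ^ (k - (2 * 0 + 1))
              * (p : ℤ_[p]) ^ (μ * 0)) * w ^ 0 := by
        rw [hSeval]
        exact Finset.sum_range_succ' _ k
      have hhead : ‖F ((k.choose (2 * 0 + 1) : ℤ_[p]) * α ^ (k - (2 * 0 + 1))
          * (p : ℤ_[p]) ^ (μ * 0)) * w ^ 0‖ = K := by
        simp only [mul_zero, zero_add, pow_zero, mul_one, Nat.choose_one_right]
        rw [hFnorm, norm_mul, padic_norm_pow, hαnorm, one_pow, mul_one]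
      have hwB : ‖w‖ / B < 1 := (div_lt_one hB0).2 hcon
      have hwB0 : 0 ≤ ‖w‖ / B := by positivity
      have htail : ‖∑ i ∈ Finset.range k,
          F ((k.choose (2 * (i + 1) + 1) : ℤ_[p]) * α ^ (k - (2 * (i + 1) + 1))
              * (p : ℤ_[p]) ^ (μ * (i + 1))) * w ^ (i + 1)‖ ≤ K * (‖w‖ / B) := by
        apply norm_sum_le_of_forall_le_of_nonneg (by positivity)
        intro i _
        have hj1 : 1 ≤ i + 1 := by omega
        rw [norm_mul, hFnorm, norm_mul, norm_mul, padic_norm_pow,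
          padic_norm_pow, hαnorm, one_pow, mul_one, PadicInt.norm_p, norm_pow]
        have hwj : ‖w‖ ^ (i + 1) = B ^ (i + 1) * (‖w‖ / B) ^ (i + 1) := by
          rw [← mul_pow]
          congr 1
          field_simp
        have hrpow : (p : ℝ) ^ ((2 * (i + 1) : ℝ) / ((p : ℝ) - 1)) * ((p : ℝ)⁻¹) ^ (μ * (i + 1))
            * B ^ (i + 1) = 1 := by
          rw [hB, inv_pow, ← Real.rpow_natCast (p : ℝ) (μ * (i + 1)),
            ← Real.rpow_neg (le_of_lt hP0),
            ← Real.rpow_natCast ((p : ℝ) ^ ((μ : ℝ) - 2 / ((p : ℝ) - 1))) (i + 1),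
            ← Real.rpow_mul (le_of_lt hP0), ← Real.rpow_add hP0, ← Real.rpow_add hP0,
            show (2 * (i + 1) : ℝ) / ((p : ℝ) - 1) + -(((μ * (i + 1) : ℕ)) : ℝ)
              + ((μ : ℝ) - 2 / ((p : ℝ) - 1)) * ((i + 1 : ℕ) : ℝ) = 0 by
                push_cast
                ring, Real.rpow_zero]
        have hratej : (‖w‖ / B) ^ (i + 1) ≤ ‖w‖ / B :=
          pow_le_of_le_one hwB0 (le_of_lt hwB) (by omega)
        have hcb := choose_norm_bound (p := p) k (i + 1) hk hj1
        calc ‖((k.choose (2 * (i + 1) + 1)) : ℤ_[p])‖ * ((p : ℝ)⁻¹) ^ (μ * (i + 1)) * ‖w‖ ^ (i + 1)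
            ≤ (K * (p : ℝ) ^ ((2 * (i + 1) : ℝ) / ((p : ℝ) - 1))) * ((p : ℝ)⁻¹) ^ (μ * (i + 1))
              * (B ^ (i + 1) * (‖w‖ / B) ^ (i + 1)) := by
              rw [hwj]
              apply mul_le_mul_of_nonneg_right _ (by positivity)
              apply mul_le_mul_of_nonneg_right _ (by positivity)
              exact_mod_cast hcb
          _ = K * ((p : ℝ) ^ ((2 * (i + 1) : ℝ) / ((p : ℝ) - 1)) * ((p : ℝ)⁻¹) ^ (μ * (i + 1))
              * B ^ (i + 1)) * (‖w‖ / B) ^ (i + 1) := by ring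
          _ = K * (‖w‖ / B) ^ (i + 1) := by rw [hrpow, mul_one]
          _ ≤ K * (‖w‖ / B) := mul_le_mul_of_nonneg_left hratej (le_of_lt hK0)
      have hS0 : S ≠ 0 := by
        intro hS0'
        rw [hSsum] at hS0'
        have hhead2 : F ((k.choose (2 * 0 + 1) : ℤ_[p]) * α ^ (k - (2 * 0 + 1))
            * (p : ℤ_[p]) ^ (μ * 0)) * w ^ 0
            = - ∑ i ∈ Finset.range k,
              F ((k.choose (2 * (i + 1) + 1) : ℤ_[p]) * α ^ (k - (2 * (i + 1) + 1))
                * (p : ℤ_[p]) ^ (μ * (i + 1))) * w ^ (i + 1) := by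
          linear_combination hS0'
        have h2 : ‖F ((k.choose (2 * 0 + 1) : ℤ_[p]) * α ^ (k - (2 * 0 + 1))
            * (p : ℤ_[p]) ^ (μ * 0)) * w ^ 0‖ ≤ K * (‖w‖ / B) := by
          rw [hhead2, norm_neg]
          exact htail
        rw [hhead] at h2
        nlinarith
      -- construct the root of unity
      set y : L := (R - 1) / S with hy
      have hyS : y * S = R - 1 := div_mul_cancel₀ _ hS0
      have hy2 : y ^ 2 = w * F (p : ℤ_[p]) ^ μ := by
        rw [hy, div_pow, h0, mul_div_assoc, div_self (pow_ne_zero 2 hS0), mul_one]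
      have hlam : (F α - y) ^ k = 1 := by
        have hkey := rs_key α μ k F w (-y) (by rw [neg_sq]; exact hy2)
        rw [← hR, ← hS] at hkey
        rw [sub_eq_add_neg, hkey, neg_mul, hyS]
        ring
      have hFα : ‖F α - F ζ‖ < (p : ℝ) ^ (-1 / ((p : ℝ) - 1)) := by
        rw [← map_sub, hFnorm]
        have h1 : ‖α - ζ‖ = (p : ℝ) ^ (-v) := by rw [norm_sub_rev, hζd, hnormval]
        rw [h1, ← Real.rpow_intCast (p : ℝ) (-v)]
        apply (Real.rpow_lt_rpow_left_iff hP).2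
        push_cast
        have h2 : (-1) / ((p : ℝ) - 1) = -(1 / ((p : ℝ) - 1)) := by ring
        rw [h2]
        linarith
      have hyn : ‖y‖ < (p : ℝ) ^ (-1 / ((p : ℝ) - 1)) := by
        have h1 : ‖y‖ ^ 2 = ‖w‖ * ((p : ℝ)⁻¹) ^ μ := by
          rw [← norm_pow, hy2, norm_mul, norm_pow, hFp, hGp]
        have h2 : ‖w‖ * ((p : ℝ)⁻¹) ^ μ < B * ((p : ℝ)⁻¹) ^ μ :=
          mul_lt_mul_of_pos_right hcon (by positivity)
        have h3 : B * ((p : ℝ)⁻¹) ^ μ = ((p : ℝ) ^ (-1 / ((p : ℝ) - 1))) ^ 2 := by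
          rw [hB, inv_pow, ← Real.rpow_natCast (p : ℝ) μ, ← Real.rpow_neg hP0.le,
            ← Real.rpow_add hP0,
            ← Real.rpow_natCast ((p : ℝ) ^ (-1 / ((p : ℝ) - 1))) 2,
            ← Real.rpow_mul hP0.le]
          congr 1
          push_cast
          ring
        nlinarith [norm_nonneg y, Real.rpow_pos_of_pos hP0 (-1 / ((p : ℝ) - 1))]
      have hFζnorm : ‖F ζ‖ = 1 := by rw [hFnorm]; exact hζu
      have hFζ0 : F ζ ≠ 0 := by
        intro h
        rw [h, norm_zero] at hFζnorm
        norm_num at hFζnorm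
      have hlamz : ‖(F α - y) - F ζ‖ < (p : ℝ) ^ (-1 / ((p : ℝ) - 1)) := by
        have he : (F α - y) - F ζ = (F α - F ζ) + (-y) := by ring
        rw [he]
        exact lt_of_le_of_lt (norm_add_le_max _ _) (max_lt hFα (by rwa [norm_neg]))
      set δ : L := (F α - y) * (F ζ)⁻¹ with hδ
      have hδpow : δ ^ (k * o) = 1 := by
        have h1 : (F α - y) ^ (k * o) = 1 := by rw [pow_mul, hlam, one_pow]
        have h2 : (F ζ) ^ (k * o) = 1 := by
          rw [mul_comm, pow_mul, ← map_pow, hζo, map_one, one_pow]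
        rw [hδ, mul_pow, h1, inv_pow, h2, inv_one, mul_one]
      have hδ1 : ‖δ - 1‖ < (p : ℝ) ^ (-1 / ((p : ℝ) - 1)) := by
        have he : δ - 1 = ((F α - y) - F ζ) * (F ζ)⁻¹ := by
          rw [hδ]
          field_simp
        rw [he, norm_mul, norm_inv, hFζnorm, inv_one, mul_one]
        exact hlamz
      have hδeq : δ = 1 :=
        rigid hGp hGnat hGm1 (Nat.mul_ne_zero (by omega) (by omega)) hδpow hδ1
      rw [hδ] at hδeq
      have hlameq : F α - y = F ζ := (mul_inv_eq_one₀ hFζ0).1 hδeq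
      have hyval : y = F α - F ζ := by rw [← hlameq]; ring
      have hGz : w * (p : L) ^ μ = G z * (p : L) ^ μ := by
        have h1 : w * (p : L) ^ μ = y ^ 2 := by rw [hy2, hFp]
        have h2 : G z * (p : L) ^ μ = (G y₀) ^ 2 := by
          have h3 : ((p : L)) ^ μ = G ((p : ℚ_[p]) ^ μ) := by rw [map_pow, map_natCast]
          rw [h3, ← map_mul, ← hzmul, map_pow]
        have h3 : G y₀ = F ζ - F α := by
          rw [hy₀, ← RingHom.comp_apply, ← hF, map_sub]
        rw [h1, h2, h3, hyval]
        ring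
      have hpL : ((p : L)) ^ μ ≠ 0 := by
        apply pow_ne_zero
        intro h
        rw [h, norm_zero] at hGp
        exact absurd hGp.symm (ne_of_gt (by positivity))
      exact hwz (mul_right_cancel₀ hpL hGz)
end
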